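/- arXiv:2108.10022 — 10 statements merged into one kernel-verified Lean document; each statement's English description precedes it below -/
import Mathlib

section
/- For 0 < α < 1 and integer n ≥ 2, the quantity φ_n(α)/n is strictly increasing in n; that is, φ_n(α)/n < φ_{n+1}(α)/(n+1). -/
noncomputable def phi (α : ℝ) (n : ℕ) : ℝ :=
  ((n : ℝ) - 1 + Real.sqrt ((n : ℝ)^2 - 2 * n * Real.cos (Real.pi * α) + 1)) /
    (2 * Real.sin (Real.pi * α / 2))

theorem stmt0 (α : ℝ) (hα0 : 0 < α) (hα1 : α < 1) (n : ℕ) (hn : 2 ≤ n) :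
    phi α n / n < phi α (n + 1) / (n + 1) := by
  have hπ := Real.pi_pos
  set c := Real.cos (Real.pi * α) with hcdef
  have hαπ0 : 0 < Real.pi * α := by positivity
  have hαπ1 : Real.pi * α < Real.pi := by nlinarith
  have hc1 : c < 1 := by
    have := Real.cos_lt_cos_of_nonneg_of_le_pi (le_refl 0) (le_of_lt hαπ1) hαπ0
    simpa using this
  have hcm1 : -1 < c := by
    have := Real.cos_lt_cos_of_nonneg_of_le_pi (le_of_lt hαπ0) (le_refl Real.pi) hαπ1
    simpa [Real.cos_pi] using this
  have hs : 0 < Real.sin (Real.pi * α / 2) :=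
    Real.sin_pos_of_pos_of_lt_pi (by positivity) (by nlinarith)
  have hn2 : (2:ℝ) ≤ (n:ℝ) := by exact_mod_cast hn
  set A : ℝ := (n : ℝ)^2 - 2 * n * c + 1 with hAdef
  set B : ℝ := ((n:ℝ)+1)^2 - 2 * ((n:ℝ)+1) * c + 1 with hBdef
  have hA : 0 ≤ A := by nlinarith [sq_nonneg ((n:ℝ) - c)]
  have hB : 0 ≤ B := by nlinarith [sq_nonneg ((n:ℝ) + 1 - c)]
  set sa := Real.sqrt A with hsadef
  set sb := Real.sqrt B with hsbdef
  have hsa0 : 0 ≤ sa := Real.sqrt_nonneg _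
  have hsb0 : 0 ≤ sb := Real.sqrt_nonneg _
  have hsa2 : sa ^ 2 = A := Real.sq_sqrt hA
  have hsb2 : sb ^ 2 = B := Real.sq_sqrt hB
  have hsbgt : (n:ℝ) + 1 - c < sb := by
    have h1 : ((n:ℝ) + 1 - c)^2 < B := by nlinarith
    have h0 : 0 ≤ (n:ℝ) + 1 - c := by nlinarith
    exact (Real.lt_sqrt h0).mpr h1
  clear_value c A B sa sb
  have h3 : 1 - ((n:ℝ)+1)*c < sb := by nlinarith [hsbgt, hcm1, hn2]
  have hkey : ((n:ℝ) + 1) * sa < (n:ℝ) * sb + 1 := by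
    have hrhs : 0 ≤ (n:ℝ) * sb + 1 := by positivity
    refine lt_of_pow_lt_pow_left₀ 2 hrhs ?_
    have h1 : (((n:ℝ)+1) * sa)^2 - ((n:ℝ) * sb)^2 = 2*(n:ℝ) + 1 - 2*(n:ℝ)*((n:ℝ)+1)*c := by
      rw [mul_pow, mul_pow, hsa2, hsb2, hAdef, hBdef]; ring
    have h4 : 2*(n:ℝ)*(1 - ((n:ℝ)+1)*c) < 2*(n:ℝ)*sb :=
      mul_lt_mul_of_pos_left h3 (by linarith : (0:ℝ) < 2*(n:ℝ))
    have hexp2 : ((n:ℝ) * sb + 1)^2 = ((n:ℝ)*sb)^2 + 2 * ((n:ℝ)*sb) + 1 := by ring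
    rw [hexp2]
    linarith [h1, h4]
  have hfin : ((n:ℝ)-1+sa)*((n:ℝ)+1) < ((n:ℝ)+sb)*(n:ℝ) := by nlinarith [hkey]
  unfold phi
  rw [← hcdef, ← hAdef]
  have hBeq : ((((n:ℕ)+1 : ℕ)) : ℝ)^2 - 2 * (((n:ℕ)+1 : ℕ) : ℝ) * c + 1 = B := by
    rw [hBdef]; push_cast; ring
  rw [hBeq, ← hsadef, ← hsbdef]
  rw [div_div, div_div, div_lt_div_iff₀ (by positivity) (by positivity)]
  push_cast
  have hmain := mul_lt_mul_of_pos_left hfin (by positivity : (0:ℝ) < 2 * Real.sin (Real.pi * α / 2))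
  linarith [hmain]
end

section
/- For 0 < α < 1 and every integer n ≥ 2, we have n < φ_n(α) < n / sin(πα/2) < ψ_n(α). -/
noncomputable def psi (α : ℝ) (n : ℕ) : ℝ :=
  ((n : ℝ) + 1 + Real.sqrt ((n : ℝ)^2 + 2 * n * Real.cos (Real.pi * α) + 1)) /
    (2 * Real.sin (Real.pi * α / 2))

set_option maxHeartbeats 1600000 in
theorem stmt2 (α : ℝ) (hα0 : 0 < α) (hα1 : α < 1) (n : ℕ) (hn : 2 ≤ n) :
    (n : ℝ) < phi α n ∧ phi α n < n / Real.sin (Real.pi * α / 2) ∧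
      (n : ℝ) / Real.sin (Real.pi * α / 2) < psi α n := by
  have hn2 : (2:ℝ) ≤ (n:ℝ) := by exact_mod_cast hn
  have hpi := Real.pi_pos
  set s := Real.sin (Real.pi * α / 2) with hs
  have hsp : 0 < s :=
    Real.sin_pos_of_pos_of_lt_pi (by positivity) (by nlinarith)
  have hcpos : 0 < Real.cos (Real.pi * α / 2) :=
    Real.cos_pos_of_mem_Ioo ⟨by nlinarith, by nlinarith⟩
  have hpyth := Real.sin_sq_add_cos_sq (Real.pi * α / 2)
  have hs1 : s < 1 := by nlinarith [mul_pos hcpos hcpos]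
  have hc : Real.cos (Real.pi * α) = 1 - 2 * s^2 := by
    have h2 : Real.pi * α = 2 * (Real.pi * α / 2) := by ring
    rw [h2, Real.cos_two_mul]
    nlinarith
  have hA : (n:ℝ)^2 - 2*n*Real.cos (Real.pi*α) + 1 = ((n:ℝ)-1)^2 + 4*n*s^2 := by
    rw [hc]; ring
  have hB : (n:ℝ)^2 + 2*n*Real.cos (Real.pi*α) + 1 = ((n:ℝ)+1)^2 - 4*n*s^2 := by
    rw [hc]; ring
  have hAnn : (0:ℝ) ≤ ((n:ℝ)-1)^2 + 4*n*s^2 := by positivity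
  have hBnn : (0:ℝ) ≤ ((n:ℝ)+1)^2 - 4*n*s^2 := by nlinarith
  have hss : s * s < 1 := by nlinarith
  have hgt1 : 2*(n:ℝ)*s - ((n:ℝ)-1) < Real.sqrt (((n:ℝ)-1)^2 + 4*n*s^2) := by
    rcases le_or_gt (2*(n:ℝ)*s - ((n:ℝ)-1)) 0 with h | h
    · rcases eq_or_lt_of_le (Real.sqrt_nonneg (((n:ℝ)-1)^2 + 4*n*s^2)) with he | hl
      · exfalso
        have := (Real.sqrt_eq_zero hAnn).mp he.symm
        nlinarith
      · linarith
    · rw [show 2*(n:ℝ)*s - ((n:ℝ)-1) = √((2*(n:ℝ)*s - ((n:ℝ)-1))^2) from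
        (Real.sqrt_sq h.le).symm]
      apply Real.sqrt_lt_sqrt (by positivity)
      have key : 0 < s * (((n:ℝ)-1) * (1-s)) :=
        mul_pos hsp (mul_pos (by linarith) (by linarith))
      nlinarith [key, mul_pos (by linarith : (0:ℝ) < (n:ℝ)) key]
  have hlt : Real.sqrt (((n:ℝ)-1)^2 + 4*n*s^2) < (n:ℝ)+1 := by
    rw [Real.sqrt_lt' (by positivity)]
    nlinarith
  have hgt : (n:ℝ)-1 < Real.sqrt (((n:ℝ)+1)^2 - 4*n*s^2) := by
    rw [Real.lt_sqrt (by linarith)]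
    nlinarith
  have h2s : (0:ℝ) < 2 * s := by positivity
  refine ⟨?_, ?_, ?_⟩
  · rw [phi, hA, lt_div_iff₀ h2s]
    linarith
  · rw [phi, hA, div_lt_div_iff₀ h2s hsp]
    have key := mul_lt_mul_of_pos_right hlt hsp
    nlinarith [key]
  · rw [psi, hB, div_lt_div_iff₀ hsp h2s]
    have key := mul_lt_mul_of_pos_right hgt hsp
    nlinarith [key]
end

section
/- Let (a_n)_{n≥2} and (b_n)_{n≥1} be complex sequences with Σ_{n≥2} n|a_n| + Σ_{n≥1} n|b_n| ≤ k < 1. Define f(z) = z + Σ_{n≥2} a_n z^n + conj(Σ_{n≥1} b_n z^n) on the open unit disk. Then for all z₁, z₂ in the unit disk, (1−k)|z₁−z₂| ≤ |f(z₁)−f(z₂)| ≤ (1+k)|z₁−z₂|; in particular f is injective on the unit disk. -/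
open Complex

lemma pow_sub_pow_abs_le {z w : ℂ} (hz : ‖z‖ ≤ 1) (hw : ‖w‖ ≤ 1) (n : ℕ) :
    ‖z ^ n - w ^ n‖ ≤ n * ‖z - w‖ := by
  rw [← geom_sum₂_mul, norm_mul]
  gcongr
  calc ‖∑ i ∈ Finset.range n, z ^ i * w ^ (n - 1 - i)‖
      ≤ ∑ i ∈ Finset.range n, ‖z ^ i * w ^ (n - 1 - i)‖ := by
        exact (norm_sum_le _ _)
    _ ≤ ∑ i ∈ Finset.range n, 1 := by
        apply Finset.sum_le_sum
        intro i _
        rw [norm_mul, norm_pow, norm_pow]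
        exact mul_le_one₀ (pow_le_one₀ (norm_nonneg z) hz) (by positivity) (pow_le_one₀ (norm_nonneg w) hw)
    _ = n := by simp

theorem stmt4 (a b : ℕ → ℂ) (k : ℝ) (hk : k < 1)
    (hsum : (∑' n : ℕ, ((n : ℝ) + 2) * ‖a (n + 2)‖) +
      (∑' n : ℕ, ((n : ℝ) + 1) * ‖b (n + 1)‖) ≤ k)
    (hsa : Summable fun n : ℕ => ((n : ℝ) + 2) * ‖a (n + 2)‖)
    (hsb : Summable fun n : ℕ => ((n : ℝ) + 1) * ‖b (n + 1)‖)
    (f : ℂ → ℂ)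
    (hf : ∀ z : ℂ, f z = z + (∑' n : ℕ, a (n + 2) * z ^ (n + 2)) +
      (starRingEnd ℂ) (∑' n : ℕ, b (n + 1) * z ^ (n + 1))) :
    (∀ z₁ z₂ : ℂ, ‖z₁‖ < 1 → ‖z₂‖ < 1 →
      (1 - k) * ‖z₁ - z₂‖ ≤ ‖f z₁ - f z₂‖ ∧
        ‖f z₁ - f z₂‖ ≤ (1 + k) * ‖z₁ - z₂‖) ∧
      Set.InjOn f {z : ℂ | ‖z‖ < 1} := by
  -- summability of the series at any point in the closed disk
  have hsaz : ∀ z : ℂ, ‖z‖ ≤ 1 → Summable (fun n : ℕ => a (n + 2) * z ^ (n + 2)) := by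
    intro z hz
    apply Summable.of_norm
    apply hsa.of_nonneg_of_le (fun n => norm_nonneg _)
    intro n
    simp only [norm_mul, norm_pow]
    calc ‖a (n + 2)‖ * ‖z‖ ^ (n + 2)
        ≤ ‖a (n + 2)‖ * 1 := by
          gcongr
          exact pow_le_one₀ (norm_nonneg z) hz
      _ ≤ ((n : ℝ) + 2) * ‖a (n + 2)‖ := by
          rw [mul_one]; nlinarith [norm_nonneg (a (n+2)), (Nat.cast_nonneg n : (0:ℝ) ≤ n)]
  have hsbz : ∀ z : ℂ, ‖z‖ ≤ 1 → Summable (fun n : ℕ => b (n + 1) * z ^ (n + 1)) := by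
    intro z hz
    apply Summable.of_norm
    apply hsb.of_nonneg_of_le (fun n => norm_nonneg _)
    intro n
    simp only [norm_mul, norm_pow]
    calc ‖b (n + 1)‖ * ‖z‖ ^ (n + 1)
        ≤ ‖b (n + 1)‖ * 1 := by
          gcongr
          exact pow_le_one₀ (norm_nonneg z) hz
      _ ≤ ((n : ℝ) + 1) * ‖b (n + 1)‖ := by
          rw [mul_one]; nlinarith [norm_nonneg (b (n+1)), (Nat.cast_nonneg n : (0:ℝ) ≤ n)]
  -- key estimate
  have key : ∀ z₁ z₂ : ℂ, ‖z₁‖ < 1 → ‖z₂‖ < 1 →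
      ‖f z₁ - f z₂ - (z₁ - z₂)‖ ≤ k * ‖z₁ - z₂‖ := by
    intro z₁ z₂ h1 h2
    have h1' := h1.le
    have h2' := h2.le
    have ha1 := hsaz z₁ h1'
    have ha2 := hsaz z₂ h2'
    have hb1 := hsbz z₁ h1'
    have hb2 := hsbz z₂ h2'
    have heq : f z₁ - f z₂ - (z₁ - z₂) =
        (∑' n : ℕ, a (n + 2) * (z₁ ^ (n + 2) - z₂ ^ (n + 2))) +
        (starRingEnd ℂ) (∑' n : ℕ, b (n + 1) * (z₁ ^ (n + 1) - z₂ ^ (n + 1))) := by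
      rw [hf, hf]
      have e1 : (∑' n : ℕ, a (n + 2) * (z₁ ^ (n + 2) - z₂ ^ (n + 2))) =
          (∑' n : ℕ, a (n + 2) * z₁ ^ (n + 2)) - (∑' n : ℕ, a (n + 2) * z₂ ^ (n + 2)) := by
        rw [← Summable.tsum_sub ha1 ha2]; congr 1; ext n; ring
      have e2 : (∑' n : ℕ, b (n + 1) * (z₁ ^ (n + 1) - z₂ ^ (n + 1))) =
          (∑' n : ℕ, b (n + 1) * z₁ ^ (n + 1)) - (∑' n : ℕ, b (n + 1) * z₂ ^ (n + 1)) := by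
        rw [← Summable.tsum_sub hb1 hb2]; congr 1; ext n; ring
      rw [e1, e2, map_sub]
      ring
    rw [heq]
    set d := ‖z₁ - z₂‖ with hd
    have boundA : ‖∑' n : ℕ, a (n + 2) * (z₁ ^ (n + 2) - z₂ ^ (n + 2))‖ ≤
        (∑' n : ℕ, ((n : ℝ) + 2) * ‖a (n + 2)‖) * d := by
      rw [← tsum_mul_right]
      have hsab : Summable fun n : ℕ => (((n : ℝ) + 2) * ‖a (n + 2)‖) * d :=
        hsa.mul_right d
      calc ‖∑' n : ℕ, a (n + 2) * (z₁ ^ (n + 2) - z₂ ^ (n + 2))‖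
          ≤ ∑' n : ℕ, ‖a (n + 2) * (z₁ ^ (n + 2) - z₂ ^ (n + 2))‖ :=
            by exact
              norm_tsum_le_tsum_norm ((ha1.sub ha2).congr (fun n => by ring)).norm
        _ ≤ ∑' n : ℕ, (((n : ℝ) + 2) * ‖a (n + 2)‖) * d := by
            apply Summable.tsum_le_tsum _ (((ha1.sub ha2).congr (fun n => by ring)).norm) hsab
            intro n
            rw [norm_mul]
            have hb := pow_sub_pow_abs_le h1' h2' (n + 2)
            calc ‖a (n + 2)‖ * ‖z₁ ^ (n + 2) - z₂ ^ (n + 2)‖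
                ≤ ‖a (n + 2)‖ * (((n : ℕ) + 2 : ℕ) * d) := by
                  gcongr
              _ = (((n : ℝ) + 2) * ‖a (n + 2)‖) * d := by push_cast; ring
    have boundB : ‖(starRingEnd ℂ) (∑' n : ℕ, b (n + 1) * (z₁ ^ (n + 1) - z₂ ^ (n + 1)))‖ ≤
        (∑' n : ℕ, ((n : ℝ) + 1) * ‖b (n + 1)‖) * d := by
      rw [Complex.norm_conj, ← tsum_mul_right]
      have hsbb : Summable fun n : ℕ => (((n : ℝ) + 1) * ‖b (n + 1)‖) * d :=
        hsb.mul_right d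
      calc ‖∑' n : ℕ, b (n + 1) * (z₁ ^ (n + 1) - z₂ ^ (n + 1))‖
          ≤ ∑' n : ℕ, ‖b (n + 1) * (z₁ ^ (n + 1) - z₂ ^ (n + 1))‖ :=
            by exact
              norm_tsum_le_tsum_norm ((hb1.sub hb2).congr (fun n => by ring)).norm
        _ ≤ ∑' n : ℕ, (((n : ℝ) + 1) * ‖b (n + 1)‖) * d := by
            apply Summable.tsum_le_tsum _ (((hb1.sub hb2).congr (fun n => by ring)).norm) hsbb
            intro n
            rw [norm_mul]
            have hb := pow_sub_pow_abs_le h1' h2' (n + 1)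
            calc ‖b (n + 1)‖ * ‖z₁ ^ (n + 1) - z₂ ^ (n + 1)‖
                ≤ ‖b (n + 1)‖ * (((n : ℕ) + 1 : ℕ) * d) := by
                  gcongr
              _ = (((n : ℝ) + 1) * ‖b (n + 1)‖) * d := by push_cast; ring
    calc ‖_ + _‖ ≤ _ + _ := norm_add_le _ _
      _ ≤ (∑' n : ℕ, ((n : ℝ) + 2) * ‖a (n + 2)‖) * d +
          (∑' n : ℕ, ((n : ℝ) + 1) * ‖b (n + 1)‖) * d :=
        add_le_add boundA boundB
      _ ≤ k * d := by nlinarith [norm_nonneg (z₁ - z₂)]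
  have main : ∀ z₁ z₂ : ℂ, ‖z₁‖ < 1 → ‖z₂‖ < 1 →
      (1 - k) * ‖z₁ - z₂‖ ≤ ‖f z₁ - f z₂‖ ∧
        ‖f z₁ - f z₂‖ ≤ (1 + k) * ‖z₁ - z₂‖ := by
    intro z₁ z₂ h1 h2
    have hkey := key z₁ z₂ h1 h2
    constructor
    · have : ‖z₁ - z₂‖ - ‖f z₁ - f z₂‖ ≤
          ‖(z₁ - z₂) - (f z₁ - f z₂)‖ := by
        exact norm_sub_norm_le (z₁ - z₂) (f z₁ - f z₂)
      have h2 : ‖(z₁ - z₂) - (f z₁ - f z₂)‖ = ‖f z₁ - f z₂ - (z₁ - z₂)‖ := by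
        rw [← norm_neg]; ring_nf
      linarith
    · have : ‖f z₁ - f z₂‖ - ‖z₁ - z₂‖ ≤
          ‖f z₁ - f z₂ - (z₁ - z₂)‖ := by
        exact norm_sub_norm_le (f z₁ - f z₂) (z₁ - z₂)
      linarith
  refine ⟨main, ?_⟩
  intro z₁ h1 z₂ h2 hfe
  simp only [Set.mem_setOf_eq] at h1 h2
  have := (main z₁ z₂ h1 h2).1
  rw [hfe, sub_self, norm_zero] at this
  have hd : ‖z₁ - z₂‖ ≤ 0 := by nlinarith [norm_nonneg (z₁ - z₂)]
  have : z₁ - z₂ = 0 := by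
    have := norm_nonneg (z₁ - z₂)
    exact norm_eq_zero.mp (le_antisymm hd this)
  exact sub_eq_zero.mp this
end

section
/- Let (a_n)_{n≥2} and (b_n)_{n≥1} be complex sequences with Σ_{n≥2} n|a_n| + Σ_{n≥1} n|b_n| ≤ k < 1. Define F(z) = z + Σ_{n≥2} a_n conj(z)^{-n} + Σ_{n≥1} conj(b_n) z^{-n} for |z| ≥ 1. Then for all z₁, z₂ with |z₁| ≥ 1 and |z₂| ≥ 1, (1−k)|z₁−z₂| ≤ |F(z₁)−F(z₂)| ≤ (1+k)|z₁−z₂|. -/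
open Complex

private lemma pow_aux (m : ℕ) : ∀ u v : ℂ, ‖u‖ ≤ 1 → ‖v‖ ≤ 1 →
    ‖u ^ m - v ^ m‖ ≤ m * ‖u - v‖ := by
  induction m with
  | zero => simp
  | succ m ih =>
    intro u v hu hv
    have h1 : u ^ (m + 1) - v ^ (m + 1) = u ^ m * (u - v) + (u ^ m - v ^ m) * v := by ring
    rw [h1]
    have h2 : ‖u ^ m * (u - v)‖ ≤ ‖u - v‖ := by
      rw [norm_mul, norm_pow]
      have := pow_le_one₀ (norm_nonneg u) hu (n := m)
      nlinarith [norm_nonneg (u - v), pow_nonneg (norm_nonneg u) m]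
    have h3 : ‖(u ^ m - v ^ m) * v‖ ≤ m * ‖u - v‖ := by
      rw [norm_mul]
      have := ih u v hu hv
      nlinarith [norm_nonneg (u ^ m - v ^ m), norm_nonneg v,
        mul_nonneg (Nat.cast_nonneg (α := ℝ) m) (norm_nonneg (u - v))]
    calc ‖u ^ m * (u - v) + (u ^ m - v ^ m) * v‖
        ≤ ‖u ^ m * (u - v)‖ + ‖(u ^ m - v ^ m) * v‖ :=
          norm_add_le _ _
      _ ≤ ‖u - v‖ + m * ‖u - v‖ := add_le_add h2 h3
      _ = (m + 1 : ℕ) * ‖u - v‖ := by push_cast; ring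

private lemma inv_diff (z w : ℂ) (hz : 1 ≤ ‖z‖) (hw : 1 ≤ ‖w‖) :
    ‖z⁻¹ - w⁻¹‖ ≤ ‖z - w‖ := by
  have hz0 : z ≠ 0 := by intro h; simp [h] at hz; linarith
  have hw0 : w ≠ 0 := by intro h; simp [h] at hw; linarith
  have h1 : z⁻¹ - w⁻¹ = (w - z) * z⁻¹ * w⁻¹ := by field_simp
  rw [h1, norm_mul, norm_mul, norm_inv, norm_inv]
  have hzi : (‖z‖)⁻¹ ≤ 1 := inv_le_one_of_one_le₀ hz
  have hwi : (‖w‖)⁻¹ ≤ 1 := inv_le_one_of_one_le₀ hw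
  have := norm_nonneg (w - z)
  have h2 : ‖w - z‖ = ‖z - w‖ := by rw [← neg_sub, norm_neg]
  calc ‖w - z‖ * (‖z‖)⁻¹ * (‖w‖)⁻¹
      ≤ ‖w - z‖ * 1 * 1 := by gcongr <;> positivity
    _ = ‖z - w‖ := by rw [mul_one, mul_one, h2]

private lemma key (z w : ℂ) (hz : 1 ≤ ‖z‖) (hw : 1 ≤ ‖w‖) (m : ℕ) :
    ‖z ^ (-(m : ℤ)) - w ^ (-(m : ℤ))‖ ≤ m * ‖z - w‖ := by
  have hrw : ∀ x : ℂ, x ^ (-(m : ℤ)) = (x⁻¹) ^ m := by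
    intro x; rw [zpow_neg, zpow_natCast, inv_pow]
  rw [hrw, hrw]
  have hu : ‖z⁻¹‖ ≤ 1 := by rw [norm_inv]; exact inv_le_one_of_one_le₀ hz
  have hv : ‖w⁻¹‖ ≤ 1 := by rw [norm_inv]; exact inv_le_one_of_one_le₀ hw
  calc ‖z⁻¹ ^ m - w⁻¹ ^ m‖ ≤ m * ‖z⁻¹ - w⁻¹‖ := pow_aux m _ _ hu hv
    _ ≤ m * ‖z - w‖ := by
        have := inv_diff z w hz hw
        have hm : (0:ℝ) ≤ m := Nat.cast_nonneg m
        nlinarith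

private lemma zpow_abs_le_one (z : ℂ) (hz : 1 ≤ ‖z‖) (m : ℕ) :
    ‖z ^ (-(m : ℤ))‖ ≤ 1 := by
  rw [zpow_neg, zpow_natCast, norm_inv, norm_pow]
  exact inv_le_one_of_one_le₀ (one_le_pow₀ hz)

theorem stmt5 (a b : ℕ → ℂ) (k : ℝ) (hk : k < 1)
    (hsum : (∑' n : ℕ, ((n : ℝ) + 2) * ‖a (n + 2)‖) +
      (∑' n : ℕ, ((n : ℝ) + 1) * ‖b (n + 1)‖) ≤ k)
    (hsa : Summable fun n : ℕ => ((n : ℝ) + 2) * ‖a (n + 2)‖)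
    (hsb : Summable fun n : ℕ => ((n : ℝ) + 1) * ‖b (n + 1)‖)
    (F : ℂ → ℂ)
    (hF : ∀ z : ℂ, 1 ≤ ‖z‖ →
      F z = z + (∑' n : ℕ, a (n + 2) * (starRingEnd ℂ) z ^ (-((n : ℤ) + 2))) +
        (∑' n : ℕ, (starRingEnd ℂ) (b (n + 1)) * z ^ (-((n : ℤ) + 1)))) :
    ∀ z₁ z₂ : ℂ, 1 ≤ ‖z₁‖ → 1 ≤ ‖z₂‖ →
      (1 - k) * ‖z₁ - z₂‖ ≤ ‖F z₁ - F z₂‖ ∧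
        ‖F z₁ - F z₂‖ ≤ (1 + k) * ‖z₁ - z₂‖ := by
  intro z₁ z₂ h1 h2
  have hc1 : 1 ≤ ‖(starRingEnd ℂ) z₁‖ := by rwa [Complex.norm_conj]
  have hc2 : 1 ≤ ‖(starRingEnd ℂ) z₂‖ := by rwa [Complex.norm_conj]
  have hcd : ‖(starRingEnd ℂ) z₁ - (starRingEnd ℂ) z₂‖ = ‖z₁ - z₂‖ := by
    rw [← map_sub, Complex.norm_conj]
  have hexp2 : ∀ n : ℕ, (-((n : ℤ) + 2)) = -((n + 2 : ℕ) : ℤ) := by intro n; push_cast; ring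
  have hexp1 : ∀ n : ℕ, (-((n : ℤ) + 1)) = -((n + 1 : ℕ) : ℤ) := by intro n; push_cast; ring
  -- summability of the individual series
  have hsa' : Summable fun n : ℕ => ‖a (n + 2)‖ :=
    hsa.of_nonneg_of_le (fun n => norm_nonneg _) (fun n => by
      nlinarith [norm_nonneg (a (n + 2)), Nat.cast_nonneg (α := ℝ) n])
  have hsb' : Summable fun n : ℕ => ‖b (n + 1)‖ :=
    hsb.of_nonneg_of_le (fun n => norm_nonneg _) (fun n => by
      nlinarith [norm_nonneg (b (n + 1)), Nat.cast_nonneg (α := ℝ) n])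
  have sA : ∀ z : ℂ, 1 ≤ ‖z‖ →
      Summable fun n : ℕ => a (n + 2) * (starRingEnd ℂ) z ^ (-((n : ℤ) + 2)) := by
    intro z hz
    apply Summable.of_norm
    apply hsa'.of_nonneg_of_le (fun n => norm_nonneg _)
    intro n
    rw [norm_mul, hexp2 n]
    have h := zpow_abs_le_one ((starRingEnd ℂ) z) (by rwa [Complex.norm_conj]) (n + 2)
    nlinarith [norm_nonneg (a (n + 2)),
      norm_nonneg ((starRingEnd ℂ) z ^ (-((n + 2 : ℕ) : ℤ)))]
  have sB : ∀ z : ℂ, 1 ≤ ‖z‖ →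
      Summable fun n : ℕ => (starRingEnd ℂ) (b (n + 1)) * z ^ (-((n : ℤ) + 1)) := by
    intro z hz
    apply Summable.of_norm
    apply hsb'.of_nonneg_of_le (fun n => norm_nonneg _)
    intro n
    rw [norm_mul, hexp1 n]
    have h := zpow_abs_le_one z hz (n + 1)
    simp only [Complex.norm_conj]
    nlinarith [norm_nonneg (b (n + 1)), norm_nonneg (z ^ (-((n + 1 : ℕ) : ℤ)))]
  -- the error term
  set G : ℂ := (∑' n : ℕ, (a (n + 2) * (starRingEnd ℂ) z₁ ^ (-((n : ℤ) + 2)) -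
      a (n + 2) * (starRingEnd ℂ) z₂ ^ (-((n : ℤ) + 2)))) +
    (∑' n : ℕ, ((starRingEnd ℂ) (b (n + 1)) * z₁ ^ (-((n : ℤ) + 1)) -
      (starRingEnd ℂ) (b (n + 1)) * z₂ ^ (-((n : ℤ) + 1)))) with hGdef
  have hFG : F z₁ - F z₂ = (z₁ - z₂) + G := by
    rw [hF z₁ h1, hF z₂ h2, hGdef,
      Summable.tsum_sub (sA z₁ h1) (sA z₂ h2), Summable.tsum_sub (sB z₁ h1) (sB z₂ h2)]
    ring
  -- bound on G
  have hA : ‖∑' n : ℕ, (a (n + 2) * (starRingEnd ℂ) z₁ ^ (-((n : ℤ) + 2)) -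
      a (n + 2) * (starRingEnd ℂ) z₂ ^ (-((n : ℤ) + 2)))‖ ≤
      (∑' n : ℕ, ((n : ℝ) + 2) * ‖a (n + 2)‖) * ‖z₁ - z₂‖ := by
    have hterm : ∀ n : ℕ, ‖a (n + 2) * (starRingEnd ℂ) z₁ ^ (-((n : ℤ) + 2)) -
        a (n + 2) * (starRingEnd ℂ) z₂ ^ (-((n : ℤ) + 2))‖ ≤
        ((n : ℝ) + 2) * ‖a (n + 2)‖ * ‖z₁ - z₂‖ := by
      intro n
      rw [← mul_sub, norm_mul, hexp2 n]
      have h := key ((starRingEnd ℂ) z₁) ((starRingEnd ℂ) z₂) hc1 hc2 (n + 2)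
      rw [hcd] at h
      have hn2 : ((n + 2 : ℕ) : ℝ) = (n : ℝ) + 2 := by push_cast; ring
      rw [hn2] at h
      nlinarith [norm_nonneg (a (n + 2)), norm_nonneg (z₁ - z₂),
        norm_nonneg ((starRingEnd ℂ) z₁ ^ (-((n + 2 : ℕ) : ℤ)) -
          (starRingEnd ℂ) z₂ ^ (-((n + 2 : ℕ) : ℤ)))]
    have hsum2 : Summable fun n : ℕ =>
        ((n : ℝ) + 2) * ‖a (n + 2)‖ * ‖z₁ - z₂‖ :=
      hsa.mul_right _
    calc ‖∑' n : ℕ, (a (n + 2) * (starRingEnd ℂ) z₁ ^ (-((n : ℤ) + 2)) -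
          a (n + 2) * (starRingEnd ℂ) z₂ ^ (-((n : ℤ) + 2)))‖
        ≤ ∑' n : ℕ, ((n : ℝ) + 2) * ‖a (n + 2)‖ * ‖z₁ - z₂‖ := by
          exact norm_tsum_le_tsum_norm (hsum2.of_nonneg_of_le
            (fun n => norm_nonneg _) hterm) |>.trans
            (Summable.tsum_le_tsum hterm (hsum2.of_nonneg_of_le (fun n => norm_nonneg _) hterm) hsum2)
      _ = (∑' n : ℕ, ((n : ℝ) + 2) * ‖a (n + 2)‖) * ‖z₁ - z₂‖ := by
          rw [tsum_mul_right]
  have hB : ‖∑' n : ℕ, ((starRingEnd ℂ) (b (n + 1)) * z₁ ^ (-((n : ℤ) + 1)) -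
      (starRingEnd ℂ) (b (n + 1)) * z₂ ^ (-((n : ℤ) + 1)))‖ ≤
      (∑' n : ℕ, ((n : ℝ) + 1) * ‖b (n + 1)‖) * ‖z₁ - z₂‖ := by
    have hterm : ∀ n : ℕ, ‖(starRingEnd ℂ) (b (n + 1)) * z₁ ^ (-((n : ℤ) + 1)) -
        (starRingEnd ℂ) (b (n + 1)) * z₂ ^ (-((n : ℤ) + 1))‖ ≤
        ((n : ℝ) + 1) * ‖b (n + 1)‖ * ‖z₁ - z₂‖ := by
      intro n
      rw [← mul_sub, norm_mul, Complex.norm_conj,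
        hexp1 n]
      have h := key z₁ z₂ h1 h2 (n + 1)
      have hn1 : ((n + 1 : ℕ) : ℝ) = (n : ℝ) + 1 := by push_cast; ring
      rw [hn1] at h
      nlinarith [norm_nonneg (b (n + 1)), norm_nonneg (z₁ - z₂),
        norm_nonneg (z₁ ^ (-((n + 1 : ℕ) : ℤ)) - z₂ ^ (-((n + 1 : ℕ) : ℤ)))]
    have hsum2 : Summable fun n : ℕ =>
        ((n : ℝ) + 1) * ‖b (n + 1)‖ * ‖z₁ - z₂‖ :=
      hsb.mul_right _
    calc ‖∑' n : ℕ, ((starRingEnd ℂ) (b (n + 1)) * z₁ ^ (-((n : ℤ) + 1)) -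
          (starRingEnd ℂ) (b (n + 1)) * z₂ ^ (-((n : ℤ) + 1)))‖
        ≤ ∑' n : ℕ, ((n : ℝ) + 1) * ‖b (n + 1)‖ * ‖z₁ - z₂‖ := by
          exact norm_tsum_le_tsum_norm (hsum2.of_nonneg_of_le
            (fun n => norm_nonneg _) hterm) |>.trans
            (Summable.tsum_le_tsum hterm (hsum2.of_nonneg_of_le (fun n => norm_nonneg _) hterm) hsum2)
      _ = (∑' n : ℕ, ((n : ℝ) + 1) * ‖b (n + 1)‖) * ‖z₁ - z₂‖ := by
          rw [tsum_mul_right]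
  have hG : ‖G‖ ≤ k * ‖z₁ - z₂‖ := by
    have := norm_add_le
      (∑' n : ℕ, (a (n + 2) * (starRingEnd ℂ) z₁ ^ (-((n : ℤ) + 2)) -
        a (n + 2) * (starRingEnd ℂ) z₂ ^ (-((n : ℤ) + 2))))
      (∑' n : ℕ, ((starRingEnd ℂ) (b (n + 1)) * z₁ ^ (-((n : ℤ) + 1)) -
        (starRingEnd ℂ) (b (n + 1)) * z₂ ^ (-((n : ℤ) + 1))))
    rw [← hGdef] at this
    nlinarith [norm_nonneg (z₁ - z₂)]
  constructor
  · have h := norm_add_le (F z₁ - F z₂) (-G)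
    have heq : F z₁ - F z₂ + -G = z₁ - z₂ := by rw [hFG]; ring
    rw [heq, norm_neg] at h
    linarith
  · rw [hFG]
    have h := norm_add_le (z₁ - z₂) G
    linarith
end

section
/- Let 0 < k₁ < 1, 0 < k₂ < 1, and let (φ_n)_{n≥2}, (ψ_n)_{n≥1} be positive sequences with φ_n ≥ n/k₁ and ψ_n ≥ n/k₂. Suppose (a_n)_{n≥2}, (b_n)_{n≥1} satisfy ψ_1|b_1| + Σ_{n≥2}(φ_n|a_n| + ψ_n|b_n|) ≤ 1. Then for every z in the open unit disk, |Σ_{n≥1} n b_n z^{n−1}| ≤ k₂ · |1 + Σ_{n≥2} n a_n z^{n−1}|; in particular the dilatation of f = h + conj(g) satisfies |g'(z)/h'(z)| ≤ k₂ on the unit disk. -/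
theorem stmt7 (k₁ k₂ : ℝ) (hk₁ : 0 < k₁) (hk₁' : k₁ < 1) (hk₂ : 0 < k₂) (hk₂' : k₂ < 1)
    (φ ψ : ℕ → ℝ) (hφpos : ∀ n, 2 ≤ n → 0 < φ n) (hψpos : ∀ n, 1 ≤ n → 0 < ψ n)
    (hφ : ∀ n : ℕ, 2 ≤ n → (n : ℝ) / k₁ ≤ φ n)
    (hψ : ∀ n : ℕ, 1 ≤ n → (n : ℝ) / k₂ ≤ ψ n)
    (a b : ℕ → ℂ)
    (hsa : Summable fun n : ℕ => φ (n + 2) * ‖a (n + 2)‖)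
    (hsb : Summable fun n : ℕ => ψ (n + 2) * ‖b (n + 2)‖)
    (hcoef : ψ 1 * ‖b 1‖ +
      ((∑' n : ℕ, φ (n + 2) * ‖a (n + 2)‖) +
        (∑' n : ℕ, ψ (n + 2) * ‖b (n + 2)‖)) ≤ 1) :
    ∀ z : ℂ, ‖z‖ < 1 →
      ‖∑' n : ℕ, ((n : ℂ) + 1) * b (n + 1) * z ^ n‖ ≤
        k₂ * ‖1 + ∑' n : ℕ, ((n : ℂ) + 2) * a (n + 2) * z ^ (n + 1)‖ := by
  intro z hz
  set r := ‖z‖ with hr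
  have hr0 : 0 ≤ r := norm_nonneg z
  have hrle : r ≤ 1 := le_of_lt hz
  have hrpow : ∀ n : ℕ, r ^ n ≤ 1 := fun n => pow_le_one₀ hr0 hrle
  -- key coefficient bounds
  have hna : ∀ n : ℕ, ((n:ℝ)+2) * ‖a (n+2)‖ ≤ k₁ * (φ (n+2) * ‖a (n+2)‖) := by
    intro n
    have h1 : ((n:ℝ)+2) ≤ k₁ * φ (n+2) := by
      have := hφ (n+2) (by omega)
      rw [div_le_iff₀ hk₁] at this
      push_cast at this
      linarith [mul_comm (φ (n+2)) k₁]
    calc ((n:ℝ)+2) * ‖a (n+2)‖ ≤ (k₁ * φ (n+2)) * ‖a (n+2)‖ :=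
          mul_le_mul_of_nonneg_right h1 (norm_nonneg _)
      _ = k₁ * (φ (n+2) * ‖a (n+2)‖) := by ring
  have hnb : ∀ n : ℕ, ((n:ℝ)+2) * ‖b (n+2)‖ ≤ k₂ * (ψ (n+2) * ‖b (n+2)‖) := by
    intro n
    have h1 : ((n:ℝ)+2) ≤ k₂ * ψ (n+2) := by
      have := hψ (n+2) (by omega)
      rw [div_le_iff₀ hk₂] at this
      push_cast at this
      linarith [mul_comm (ψ (n+2)) k₂]
    calc ((n:ℝ)+2) * ‖b (n+2)‖ ≤ (k₂ * ψ (n+2)) * ‖b (n+2)‖ :=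
          mul_le_mul_of_nonneg_right h1 (norm_nonneg _)
      _ = k₂ * (ψ (n+2) * ‖b (n+2)‖) := by ring
  -- summability
  have sumA : Summable fun n : ℕ => ((n:ℝ)+2) * ‖a (n+2)‖ := by
    apply Summable.of_nonneg_of_le (fun n => by positivity) hna (hsa.mul_left k₁)
  have sumB2 : Summable fun n : ℕ => ((n:ℝ)+2) * ‖b (n+2)‖ := by
    apply Summable.of_nonneg_of_le (fun n => by positivity) hnb (hsb.mul_left k₂)
  have sumB : Summable fun n : ℕ => ((n:ℝ)+1) * ‖b (n+1)‖ := by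
    rw [← summable_nat_add_iff 1]
    apply sumB2.congr
    intro n; push_cast; ring
  -- norm series for g'
  have hnormb : ∀ n : ℕ, ‖((n : ℂ) + 1) * b (n + 1) * z ^ n‖ =
      (((n:ℝ)+1) * ‖b (n+1)‖) * r ^ n := by
    intro n
    rw [norm_mul, norm_mul, norm_pow]
    congr 2
    · have : ((n : ℂ) + 1) = ((n+1 : ℕ) : ℂ) := by push_cast; ring
      rw [this, Complex.norm_natCast]; push_cast; ring
  have sumBz : Summable fun n : ℕ => ‖((n : ℂ) + 1) * b (n + 1) * z ^ n‖ := by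
    apply Summable.of_nonneg_of_le (fun n => norm_nonneg _) _ sumB
    intro n
    rw [hnormb n]
    calc (((n:ℝ)+1) * ‖b (n+1)‖) * r ^ n
        ≤ (((n:ℝ)+1) * ‖b (n+1)‖) * 1 :=
          mul_le_mul_of_nonneg_left (hrpow n) (by positivity)
      _ = ((n:ℝ)+1) * ‖b (n+1)‖ := mul_one _
  -- norm series for h' tail
  have hnorma : ∀ n : ℕ, ‖((n : ℂ) + 2) * a (n + 2) * z ^ (n+1)‖ =
      (((n:ℝ)+2) * ‖a (n+2)‖) * r ^ (n+1) := by
    intro n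
    rw [norm_mul, norm_mul, norm_pow]
    congr 2
    · have : ((n : ℂ) + 2) = ((n+2 : ℕ) : ℂ) := by push_cast; ring
      rw [this, Complex.norm_natCast]; push_cast; ring
  have sumAz : Summable fun n : ℕ => ‖((n : ℂ) + 2) * a (n + 2) * z ^ (n+1)‖ := by
    apply Summable.of_nonneg_of_le (fun n => norm_nonneg _) _ sumA
    intro n
    rw [hnorma n]
    calc (((n:ℝ)+2) * ‖a (n+2)‖) * r ^ (n+1)
        ≤ (((n:ℝ)+2) * ‖a (n+2)‖) * 1 :=
          mul_le_mul_of_nonneg_left (hrpow (n+1)) (by positivity)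
      _ = ((n:ℝ)+2) * ‖a (n+2)‖ := mul_one _
  set Ta := ∑' n : ℕ, φ (n + 2) * ‖a (n + 2)‖ with hTa
  set Tb := ∑' n : ℕ, ψ (n + 2) * ‖b (n + 2)‖ with hTb
  set A' := ∑' n : ℕ, ‖((n : ℂ) + 2) * a (n + 2) * z ^ (n+1)‖ with hA'
  -- A' ≤ Ta
  have hA'le : A' ≤ Ta := by
    have h1 : A' ≤ ∑' n : ℕ, ((n:ℝ)+2) * ‖a (n+2)‖ := by
      apply Summable.tsum_le_tsum _ sumAz sumA
      intro n
      rw [hnorma n]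
      calc (((n:ℝ)+2) * ‖a (n+2)‖) * r ^ (n+1)
          ≤ (((n:ℝ)+2) * ‖a (n+2)‖) * 1 :=
            mul_le_mul_of_nonneg_left (hrpow (n+1)) (by positivity)
        _ = ((n:ℝ)+2) * ‖a (n+2)‖ := mul_one _
    have h2 : (∑' n : ℕ, ((n:ℝ)+2) * ‖a (n+2)‖) ≤ k₁ * Ta := by
      rw [hTa, ← tsum_mul_left]
      exact Summable.tsum_le_tsum hna sumA (hsa.mul_left k₁)
    have hTa0 : 0 ≤ Ta := tsum_nonneg fun n =>
      mul_nonneg (hφpos (n+2) (by omega)).le (norm_nonneg _)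
    nlinarith
  -- bound on |g'|
  have hglhs : ‖∑' n : ℕ, ((n : ℂ) + 1) * b (n + 1) * z ^ n‖ ≤
      k₂ * (ψ 1 * ‖b 1‖ + Tb) := by
    have h1 := norm_tsum_le_tsum_norm sumBz
    have h2 : (∑' n : ℕ, ‖((n : ℂ) + 1) * b (n + 1) * z ^ n‖) ≤
        ∑' n : ℕ, ((n:ℝ)+1) * ‖b (n+1)‖ := by
      apply Summable.tsum_le_tsum _ sumBz sumB
      intro n
      rw [hnormb n]
      calc (((n:ℝ)+1) * ‖b (n+1)‖) * r ^ n
          ≤ (((n:ℝ)+1) * ‖b (n+1)‖) * 1 :=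
            mul_le_mul_of_nonneg_left (hrpow n) (by positivity)
        _ = ((n:ℝ)+1) * ‖b (n+1)‖ := mul_one _
    have h3 : (∑' n : ℕ, ((n:ℝ)+1) * ‖b (n+1)‖) =
        ‖b 1‖ + ∑' n : ℕ, ((n:ℝ)+2) * ‖b (n+2)‖ := by
      rw [Summable.tsum_eq_zero_add sumB]
      norm_num
      congr 1
      funext n
      have hb : b (n + 1 + 1) = b (n + 2) := by norm_num
      rw [hb]; push_cast; ring
    have h4 : ‖b 1‖ ≤ k₂ * (ψ 1 * ‖b 1‖) := by
      have h1' : (1:ℝ) ≤ k₂ * ψ 1 := by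
        have := hψ 1 (le_refl 1)
        rw [div_le_iff₀ hk₂] at this
        push_cast at this
        linarith [mul_comm (ψ 1) k₂]
      calc ‖b 1‖ = 1 * ‖b 1‖ := (one_mul _).symm
        _ ≤ (k₂ * ψ 1) * ‖b 1‖ :=
            mul_le_mul_of_nonneg_right h1' (norm_nonneg _)
        _ = k₂ * (ψ 1 * ‖b 1‖) := by ring
    have h5 : (∑' n : ℕ, ((n:ℝ)+2) * ‖b (n+2)‖) ≤ k₂ * Tb := by
      rw [hTb, ← tsum_mul_left]
      exact Summable.tsum_le_tsum hnb sumB2 (hsb.mul_left k₂)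
    calc ‖∑' n : ℕ, ((n : ℂ) + 1) * b (n + 1) * z ^ n‖
        ≤ ∑' n : ℕ, ((n:ℝ)+1) * ‖b (n+1)‖ := h1.trans h2
      _ = ‖b 1‖ + ∑' n : ℕ, ((n:ℝ)+2) * ‖b (n+2)‖ := h3
      _ ≤ k₂ * (ψ 1 * ‖b 1‖) + k₂ * Tb := add_le_add h4 h5
      _ = k₂ * (ψ 1 * ‖b 1‖ + Tb) := by ring
  -- lower bound on |h'|
  have hhlb : 1 - A' ≤ ‖1 + ∑' n : ℕ, ((n : ℂ) + 2) * a (n + 2) * z ^ (n + 1)‖ := by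
    have hSle : ‖∑' n : ℕ, ((n : ℂ) + 2) * a (n + 2) * z ^ (n + 1)‖ ≤ A' := by
      exact norm_tsum_le_tsum_norm sumAz
    set S := ∑' n : ℕ, ((n : ℂ) + 2) * a (n + 2) * z ^ (n + 1) with hS
    have htri : ‖(1:ℂ)‖ ≤ ‖1 + S‖ + ‖S‖ := by
      calc ‖(1:ℂ)‖ = ‖(1 + S) + (-S)‖ := by ring_nf
        _ ≤ ‖1 + S‖ + ‖-S‖ := norm_add_le _ _
        _ = ‖1 + S‖ + ‖S‖ := by rw [norm_neg]
    simp only [norm_one] at htri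
    linarith
  -- combine
  have hTb0 : 0 ≤ ψ 1 * ‖b 1‖ + Tb := by
    have : 0 ≤ Tb := tsum_nonneg fun n =>
      mul_nonneg (hψpos (n+2) (by omega)).le (norm_nonneg _)
    have : 0 ≤ ψ 1 * ‖b 1‖ :=
      mul_nonneg (hψpos 1 (le_refl 1)).le (norm_nonneg _)
    linarith [tsum_nonneg (L := SummationFilter.unconditional ℕ) (fun n => mul_nonneg (hψpos (n+2) (by omega)).le (norm_nonneg (b (n+2))) : ∀ n:ℕ, 0 ≤ ψ (n+2) * ‖b (n+2)‖)]
  have key : ψ 1 * ‖b 1‖ + Tb ≤ 1 - A' := by linarith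
  calc ‖∑' n : ℕ, ((n : ℂ) + 1) * b (n + 1) * z ^ n‖
      ≤ k₂ * (ψ 1 * ‖b 1‖ + Tb) := hglhs
    _ ≤ k₂ * (1 - A') := mul_le_mul_of_nonneg_left key hk₂.le
    _ ≤ k₂ * ‖1 + ∑' n : ℕ, ((n : ℂ) + 2) * a (n + 2) * z ^ (n + 1)‖ :=
        mul_le_mul_of_nonneg_left hhlb hk₂.le
end

section
/- Let 0 < k₁ < 1, 0 < k₂ < 1, and let (φ_n)_{n≥2}, (ψ_n)_{n≥1} be positive sequences with φ_n ≥ n/k₁ and ψ_n ≥ n/k₂, and suppose ψ_1|b_1| + Σ_{n≥2}(φ_n|a_n| + ψ_n|b_n|) ≤ 1. Then for every z with |z| > 1, |Σ_{n≥2} n a_n z^{−n−1}| ≤ k₁ · |1 − Σ_{n≥1} n conj(b_n) z^{−n−1}|. -/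
set_option maxHeartbeats 1000000

private lemma abs_tsum_le {f : ℕ → ℂ} (h : Summable fun n => ‖f n‖) :
    ‖∑' n, f n‖ ≤ ∑' n, ‖f n‖ := by
  have h' : Summable fun n => ‖f n‖ := by simpa using h
  have := norm_tsum_le_tsum_norm h'
  simpa using this


theorem stmt8 (k₁ k₂ : ℝ) (hk₁ : 0 < k₁) (hk₁' : k₁ < 1) (hk₂ : 0 < k₂) (hk₂' : k₂ < 1)
    (φ ψ : ℕ → ℝ) (hφpos : ∀ n, 2 ≤ n → 0 < φ n) (hψpos : ∀ n, 1 ≤ n → 0 < ψ n)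
    (hφ : ∀ n : ℕ, 2 ≤ n → (n : ℝ) / k₁ ≤ φ n)
    (hψ : ∀ n : ℕ, 1 ≤ n → (n : ℝ) / k₂ ≤ ψ n)
    (a b : ℕ → ℂ)
    (hsa : Summable fun n : ℕ => φ (n + 2) * ‖a (n + 2)‖)
    (hsb : Summable fun n : ℕ => ψ (n + 2) * ‖b (n + 2)‖)
    (hcoef : ψ 1 * ‖b 1‖ +
      ((∑' n : ℕ, φ (n + 2) * ‖a (n + 2)‖) +
        (∑' n : ℕ, ψ (n + 2) * ‖b (n + 2)‖)) ≤ 1) :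
    ∀ z : ℂ, 1 < ‖z‖ →
      ‖∑' n : ℕ, ((n : ℂ) + 2) * a (n + 2) * z ^ (-((n : ℤ) + 3))‖ ≤
        k₁ * ‖1 - ∑' n : ℕ, ((n : ℂ) + 1) * (starRingEnd ℂ) (b (n + 1)) * z ^ (-((n : ℤ) + 2))‖ := by
  intro z hz
  set A := ∑' n : ℕ, φ (n + 2) * ‖a (n + 2)‖ with hA
  set Bt := ∑' n : ℕ, ψ (n + 2) * ‖b (n + 2)‖ with hBt
  have hz1 : (1 : ℝ) ≤ ‖z‖ := hz.le
  -- |z ^ (negative)| ≤ 1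
  have hzpow : ∀ m : ℤ, m ≤ 0 → ‖z ^ m‖ ≤ 1 := by
    intro m hm
    rw [norm_zpow]
    exact zpow_le_one_of_nonpos₀ hz1 hm
  -- coefficient bounds
  have hka : ∀ n : ℕ, ((n : ℝ) + 2) * ‖a (n + 2)‖
      ≤ k₁ * (φ (n + 2) * ‖a (n + 2)‖) := by
    intro n
    have h1 : ((n : ℝ) + 2) ≤ k₁ * φ (n + 2) := by
      have := hφ (n + 2) (by omega)
      rw [div_le_iff₀ hk₁] at this
      push_cast at this
      linarith [mul_comm (φ (n + 2)) k₁]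
    rw [← mul_assoc]
    exact mul_le_mul_of_nonneg_right h1 (norm_nonneg _)
  have hkb : ∀ n : ℕ, ((n : ℝ) + 1) * ‖b (n + 1)‖
      ≤ k₂ * (ψ (n + 1) * ‖b (n + 1)‖) := by
    intro n
    have h1 : ((n : ℝ) + 1) ≤ k₂ * ψ (n + 1) := by
      have := hψ (n + 1) (by omega)
      rw [div_le_iff₀ hk₂] at this
      push_cast at this
      linarith [mul_comm (ψ (n + 1)) k₂]
    rw [← mul_assoc]
    exact mul_le_mul_of_nonneg_right h1 (norm_nonneg _)
  -- summabilities
  have hsa' : Summable (fun n : ℕ => ((n : ℝ) + 2) * ‖a (n + 2)‖) := by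
    apply Summable.of_nonneg_of_le (fun n => by positivity) hka (hsa.mul_left k₁)
  have hsψ : Summable (fun n : ℕ => ψ (n + 1) * ‖b (n + 1)‖) := by
    exact (summable_nat_add_iff 1).mp hsb
  have hsb' : Summable (fun n : ℕ => ((n : ℝ) + 1) * ‖b (n + 1)‖) := by
    apply Summable.of_nonneg_of_le (fun n => by positivity) hkb (hsψ.mul_left k₂)
  -- norms of series terms
  have habs_a : ∀ n : ℕ,
      ‖((n : ℂ) + 2) * a (n + 2) * z ^ (-((n : ℤ) + 3))‖
        ≤ ((n : ℝ) + 2) * ‖a (n + 2)‖ := by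
    intro n
    rw [norm_mul, norm_mul]
    have h1 : ‖(n : ℂ) + 2‖ = (n : ℝ) + 2 := by
      rw [show ((n : ℂ) + 2) = ((n + 2 : ℕ) : ℂ) by push_cast; ring, RCLike.norm_natCast]
      push_cast; ring
    rw [h1, mul_assoc]
    have := hzpow (-((n : ℤ) + 3)) (by omega)
    nlinarith [norm_nonneg (a (n + 2)), norm_nonneg (z ^ (-((n : ℤ) + 3))),
      mul_le_mul_of_nonneg_left this (norm_nonneg (a (n + 2)))]
  have habs_b : ∀ n : ℕ,
      ‖((n : ℂ) + 1) * (starRingEnd ℂ) (b (n + 1)) * z ^ (-((n : ℤ) + 2))‖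
        ≤ ((n : ℝ) + 1) * ‖b (n + 1)‖ := by
    intro n
    rw [norm_mul, norm_mul, RCLike.norm_conj]
    have h1 : ‖(n : ℂ) + 1‖ = (n : ℝ) + 1 := by
      rw [show ((n : ℂ) + 1) = ((n + 1 : ℕ) : ℂ) by push_cast; ring, RCLike.norm_natCast]
      push_cast; ring
    rw [h1, mul_assoc]
    have := hzpow (-((n : ℤ) + 2)) (by omega)
    nlinarith [norm_nonneg (b (n + 1)), norm_nonneg (z ^ (-((n : ℤ) + 2))),
      mul_le_mul_of_nonneg_left this (norm_nonneg (b (n + 1)))]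
  have hsTa : Summable (fun n : ℕ =>
      ‖((n : ℂ) + 2) * a (n + 2) * z ^ (-((n : ℤ) + 3))‖) :=
    Summable.of_nonneg_of_le (fun n => norm_nonneg _) habs_a hsa'
  have hsTb : Summable (fun n : ℕ =>
      ‖((n : ℂ) + 1) * (starRingEnd ℂ) (b (n + 1)) * z ^ (-((n : ℤ) + 2))‖) :=
    Summable.of_nonneg_of_le (fun n => norm_nonneg _) habs_b hsb'
  -- LHS bound
  have hA0 : 0 ≤ A := tsum_nonneg (fun n => mul_nonneg (hφpos _ (by omega)).le (norm_nonneg _))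
  have hLHS : ‖∑' n : ℕ, ((n : ℂ) + 2) * a (n + 2) * z ^ (-((n : ℤ) + 3))‖
      ≤ k₁ * A := by
    calc ‖∑' n : ℕ, ((n : ℂ) + 2) * a (n + 2) * z ^ (-((n : ℤ) + 3))‖
        ≤ ∑' n : ℕ, ‖((n : ℂ) + 2) * a (n + 2) * z ^ (-((n : ℤ) + 3))‖ :=
          abs_tsum_le hsTa
      _ ≤ ∑' n : ℕ, ((n : ℝ) + 2) * ‖a (n + 2)‖ := Summable.tsum_le_tsum habs_a hsTa hsa'
      _ ≤ ∑' n : ℕ, k₁ * (φ (n + 2) * ‖a (n + 2)‖) :=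
          Summable.tsum_le_tsum hka hsa' (hsa.mul_left k₁)
      _ = k₁ * A := tsum_mul_left
  -- bound for |S|
  have hS : ‖∑' n : ℕ, ((n : ℂ) + 1) * (starRingEnd ℂ) (b (n + 1))
      * z ^ (-((n : ℤ) + 2))‖ ≤ 1 - A := by
    have h1 : ‖∑' n : ℕ, ((n : ℂ) + 1) * (starRingEnd ℂ) (b (n + 1))
        * z ^ (-((n : ℤ) + 2))‖ ≤ ∑' n : ℕ, k₂ * (ψ (n + 1) * ‖b (n + 1)‖) := by
      calc ‖∑' n : ℕ, ((n : ℂ) + 1) * (starRingEnd ℂ) (b (n + 1))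
          * z ^ (-((n : ℤ) + 2))‖
          ≤ ∑' n : ℕ, ‖((n : ℂ) + 1) * (starRingEnd ℂ) (b (n + 1))
            * z ^ (-((n : ℤ) + 2))‖ := abs_tsum_le hsTb
        _ ≤ ∑' n : ℕ, ((n : ℝ) + 1) * ‖b (n + 1)‖ := Summable.tsum_le_tsum habs_b hsTb hsb'
        _ ≤ ∑' n : ℕ, k₂ * (ψ (n + 1) * ‖b (n + 1)‖) :=
            Summable.tsum_le_tsum hkb hsb' (hsψ.mul_left k₂)
    have h2 : (∑' n : ℕ, k₂ * (ψ (n + 1) * ‖b (n + 1)‖))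
        = k₂ * (ψ 1 * ‖b 1‖ + Bt) := by
      rw [tsum_mul_left, Summable.tsum_eq_zero_add hsψ]
    have hBt0 : 0 ≤ Bt := tsum_nonneg (fun n => mul_nonneg (hψpos _ (by omega)).le (norm_nonneg _))
    have hb10 : 0 ≤ ψ 1 * ‖b 1‖ := mul_nonneg (hψpos 1 le_rfl).le (norm_nonneg _)
    nlinarith
  -- finish
  have h1S : A ≤ ‖1 - ∑' n : ℕ, ((n : ℂ) + 1) * (starRingEnd ℂ) (b (n + 1))
      * z ^ (-((n : ℤ) + 2))‖ := by
    have := norm_sub_norm_le (1 : ℂ) (∑' n : ℕ, ((n : ℂ) + 1) * (starRingEnd ℂ) (b (n + 1))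
      * z ^ (-((n : ℤ) + 2)))
    simp only [norm_one] at this
    linarith
  calc ‖∑' n : ℕ, ((n : ℂ) + 2) * a (n + 2) * z ^ (-((n : ℤ) + 3))‖
      ≤ k₁ * A := hLHS
    _ ≤ k₁ * _ := mul_le_mul_of_nonneg_left h1S hk₁.le
end

section
/- Let 0 < α < 1, n ≥ 2 an integer, and let b be a complex number with |b| ≤ 2 sin(πα/2)/((n+1) + |n + e^{iπα}|). Then n|b| < 1, and the map f(z) = z + b·conj(z)^n is injective on the open unit disk. -/
open Complex

lemma aux_pow_diff (n : ℕ) (w₁ w₂ : ℂ) (h1 : ‖w₁‖ ≤ 1) (h2 : ‖w₂‖ ≤ 1) :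
    ‖w₁ ^ n - w₂ ^ n‖ ≤ n * ‖w₁ - w₂‖ := by
  rw [← geom_sum₂_mul, norm_mul]
  gcongr
  calc ‖∑ i ∈ Finset.range n, w₁ ^ i * w₂ ^ (n - 1 - i)‖
      ≤ ∑ i ∈ Finset.range n, ‖w₁ ^ i * w₂ ^ (n - 1 - i)‖ := by
        exact norm_sum_le _ _
    _ ≤ ∑ _i ∈ Finset.range n, 1 := by
        apply Finset.sum_le_sum
        intro i _
        rw [norm_mul, norm_pow, norm_pow]
        exact mul_le_one₀ (pow_le_one₀ (norm_nonneg _) h1) (pow_nonneg (norm_nonneg _) _) (pow_le_one₀ (norm_nonneg _) h2)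
    _ = n := by simp

theorem stmt13 (α : ℝ) (hα0 : 0 < α) (hα1 : α < 1) (n : ℕ) (hn : 2 ≤ n) (b : ℂ)
    (hb : ‖b‖ ≤ 2 * Real.sin (Real.pi * α / 2) /
      (((n : ℝ) + 1) + ‖(n : ℂ) + Complex.exp (Real.pi * α * Complex.I)‖)) :
    (n : ℝ) * ‖b‖ < 1 ∧
      Set.InjOn (fun z : ℂ => z + b * (starRingEnd ℂ) z ^ n) {z : ℂ | ‖z‖ < 1} := by
  have hpi := Real.pi_pos
  have hn2 : (2 : ℝ) ≤ (n : ℝ) := by exact_mod_cast hn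
  -- sin bound
  have hs1 : Real.sin (Real.pi * α / 2) < 1 := by
    have : Real.sin (Real.pi * α / 2) < Real.sin (Real.pi / 2) := by
      apply Real.sin_lt_sin_of_lt_of_le_pi_div_two
      · nlinarith
      · exact le_refl _
      · nlinarith
    rwa [Real.sin_pi_div_two] at this
  -- abs of exp is 1
  have habse : ‖Complex.exp (Real.pi * α * Complex.I)‖ = 1 := by
    rw [Complex.norm_exp]
    simp
  have hden_lb : (2 : ℝ) * n ≤ ((n : ℝ) + 1) + ‖(n : ℂ) + Complex.exp (Real.pi * α * Complex.I)‖ := by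
    have h1 : (n : ℝ) - 1 ≤ ‖(n : ℂ) + Complex.exp (Real.pi * α * Complex.I)‖ := by
      have := norm_add_le ((n : ℂ) + Complex.exp (Real.pi * α * Complex.I)) (-(Complex.exp (Real.pi * α * Complex.I)))
      simp only [add_neg_cancel_right, norm_neg] at this
      rw [habse] at this
      have h3 : ‖(n : ℂ)‖ = n := by simp
      rw [h3] at this
      linarith
    linarith
  have hden_pos : (0 : ℝ) < ((n : ℝ) + 1) + ‖(n : ℂ) + Complex.exp (Real.pi * α * Complex.I)‖ := by
    linarith
  have hnb : (n : ℝ) * ‖b‖ < 1 := by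
    have hs0 : 0 ≤ Real.sin (Real.pi * α / 2) := by
      apply Real.sin_nonneg_of_nonneg_of_le_pi <;> nlinarith
    have h1 : ‖b‖ < 1 / n := by
      calc ‖b‖ ≤ 2 * Real.sin (Real.pi * α / 2) /
          (((n : ℝ) + 1) + ‖(n : ℂ) + Complex.exp (Real.pi * α * Complex.I)‖) := hb
        _ ≤ 2 * Real.sin (Real.pi * α / 2) / (2 * n) := by
            apply div_le_div_of_nonneg_left (by linarith) (by linarith) hden_lb
        _ < 2 * 1 / (2 * n) := by
            have h2n : (0:ℝ) < 2 * n := by linarith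
            apply div_lt_div_of_pos_right (by linarith) h2n
        _ = 1 / n := by field_simp
    calc (n : ℝ) * ‖b‖ < (n : ℝ) * (1 / n) := by
          apply mul_lt_mul_of_pos_left h1 (by linarith)
      _ = 1 := by field_simp
  refine ⟨hnb, ?_⟩
  intro z₁ hz₁ z₂ hz₂ heq
  simp only [Set.mem_setOf_eq] at hz₁ hz₂
  by_contra hne
  have hd : z₁ - z₂ = b * ((starRingEnd ℂ) z₂ ^ n - (starRingEnd ℂ) z₁ ^ n) := by
    simp only at heq
    ring_nf
    linear_combination heq
  have hkey : ‖z₁ - z₂‖ ≤ (n : ℝ) * ‖b‖ * ‖z₁ - z₂‖ := by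
    calc ‖z₁ - z₂‖ = ‖b‖ * ‖(starRingEnd ℂ) z₂ ^ n - (starRingEnd ℂ) z₁ ^ n‖ := by
          rw [hd, norm_mul]
      _ ≤ ‖b‖ * ((n : ℝ) * ‖(starRingEnd ℂ) z₂ - (starRingEnd ℂ) z₁‖) := by
          apply mul_le_mul_of_nonneg_left _ (norm_nonneg _)
          exact aux_pow_diff n _ _ (by simpa using hz₂.le) (by simpa using hz₁.le)
      _ = (n : ℝ) * ‖b‖ * ‖z₁ - z₂‖ := by
          rw [show (starRingEnd ℂ) z₂ - (starRingEnd ℂ) z₁ = (starRingEnd ℂ) (z₂ - z₁) from (map_sub _ _ _).symm,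
            Complex.norm_conj, show z₂ - z₁ = -(z₁ - z₂) by ring, norm_neg]
          ring
  have hpos : 0 < ‖z₁ - z₂‖ := by
    rw [norm_pos_iff]
    exact sub_ne_zero_of_ne hne
  nlinarith
end

section
/- Let α, β, A, c be complex numbers and (a_n)_{n≥1}, (b_n)_{n≥1} complex sequences with |β| + |A| + Σ_{n≥1} n(|a_n| + |b_n|) ≤ k|α| for some 0 < k < 1. Define f(z) = αz + β·conj(z) + Σ_{n≥0} a_n z^{−n} + conj(Σ_{n≥1} b_n z^{−n}) + A·log|z| for |z| > 1. Then for all z₁, z₂ with |z₁| > 1, |z₂| > 1: (1−k)|α|·|z₁−z₂| ≤ |f(z₁)−f(z₂)| ≤ (1+k)|α|·|z₁−z₂|. -/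
lemma aux_zpow_diff (z₁ z₂ : ℂ) (h₁ : 1 < ‖z₁‖) (h₂ : 1 < ‖z₂‖) (n : ℕ) :
    ‖z₁ ^ (-(n : ℤ)) - z₂ ^ (-(n : ℤ))‖ ≤ n * ‖z₁ - z₂‖ := by
  have hz₁ : z₁ ≠ 0 := by intro h; simp [h] at h₁; linarith
  have hz₂ : z₂ ≠ 0 := by intro h; simp [h] at h₂; linarith
  have h1' : (1:ℝ) ≤ ‖z₁‖ := h₁.le
  have h2' : (1:ℝ) ≤ ‖z₂‖ := h₂.le
  rw [zpow_neg, zpow_neg, zpow_natCast, zpow_natCast,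
    inv_sub_inv (pow_ne_zero n hz₁) (pow_ne_zero n hz₂), norm_div, norm_mul, norm_pow, norm_pow]
  rw [div_le_iff₀ (by positivity)]
  have key : z₂ ^ n - z₁ ^ n = (∑ i ∈ Finset.range n, z₂ ^ i * z₁ ^ (n - 1 - i)) * (z₂ - z₁) :=
    (geom_sum₂_mul z₂ z₁ n).symm
  rw [key, norm_mul]
  have hsum : ‖∑ i ∈ Finset.range n, z₂ ^ i * z₁ ^ (n - 1 - i)‖ ≤
      n * (‖z₁‖ ^ n * ‖z₂‖ ^ n) := by
    calc ‖∑ i ∈ Finset.range n, z₂ ^ i * z₁ ^ (n - 1 - i)‖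
        ≤ ∑ i ∈ Finset.range n, ‖z₂ ^ i * z₁ ^ (n - 1 - i)‖ :=
          norm_sum_le _ _
      _ ≤ ∑ i ∈ Finset.range n, ‖z₁‖ ^ n * ‖z₂‖ ^ n := by
          apply Finset.sum_le_sum
          intro i hi
          rw [norm_mul, norm_pow, norm_pow]
          have e1 : ‖z₂‖ ^ i ≤ ‖z₂‖ ^ n :=
            pow_le_pow_right₀ h2' (Finset.mem_range.mp hi).le
          have e2 : ‖z₁‖ ^ (n - 1 - i) ≤ ‖z₁‖ ^ n :=
            pow_le_pow_right₀ h1' (by omega)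
          calc ‖z₂‖ ^ i * ‖z₁‖ ^ (n - 1 - i)
              ≤ ‖z₂‖ ^ n * ‖z₁‖ ^ n := by
                apply mul_le_mul e1 e2 (by positivity) (by positivity)
            _ = ‖z₁‖ ^ n * ‖z₂‖ ^ n := by ring
      _ = n * (‖z₁‖ ^ n * ‖z₂‖ ^ n) := by
          rw [Finset.sum_const, Finset.card_range, nsmul_eq_mul]
  have habs : ‖z₂ - z₁‖ = ‖z₁ - z₂‖ := norm_sub_rev z₂ z₁
  rw [habs]
  have hd : (0:ℝ) ≤ ‖z₁ - z₂‖ := norm_nonneg _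
  nlinarith [norm_nonneg (∑ i ∈ Finset.range n, z₂ ^ i * z₁ ^ (n - 1 - i))]

lemma aux_log_diff {x y : ℝ} (hx : 1 ≤ x) (hy : 1 ≤ y) :
    |Real.log x - Real.log y| ≤ |x - y| := by
  wlog h : y ≤ x
  · rw [abs_sub_comm, abs_sub_comm x y]; exact this hy hx (le_of_not_ge h)
  have hx0 : (0:ℝ) < x := lt_of_lt_of_le one_pos hx
  have hy0 : (0:ℝ) < y := lt_of_lt_of_le one_pos hy
  have hlog : Real.log y ≤ Real.log x := Real.log_le_log hy0 h
  rw [abs_of_nonneg (sub_nonneg.2 hlog), abs_of_nonneg (sub_nonneg.2 h),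
    ← Real.log_div hx0.ne' hy0.ne']
  have h1 : Real.log (x / y) ≤ x / y - 1 := Real.log_le_sub_one_of_pos (by positivity)
  have h2 : x / y - 1 ≤ x - y := by
    rw [div_sub_one hy0.ne', div_le_iff₀ hy0]
    nlinarith
  linarith

theorem stmt14 (α β A : ℂ) (a b : ℕ → ℂ) (k : ℝ) (hk0 : 0 < k) (hk1 : k < 1)
    (hsum : Summable fun n : ℕ => ((n : ℝ) + 1) *
      (‖a (n + 1)‖ + ‖b (n + 1)‖))
    (hcoef : ‖β‖ + ‖A‖ +
      (∑' n : ℕ, ((n : ℝ) + 1) * (‖a (n + 1)‖ + ‖b (n + 1)‖)) ≤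
        k * ‖α‖)
    (f : ℂ → ℂ)
    (hf : ∀ z : ℂ, 1 < ‖z‖ →
      f z = α * z + β * (starRingEnd ℂ) z + (∑' n : ℕ, a n * z ^ (-(n : ℤ))) +
        (starRingEnd ℂ) (∑' n : ℕ, b (n + 1) * z ^ (-((n : ℤ) + 1))) +
        A * Real.log ‖z‖) :
    ∀ z₁ z₂ : ℂ, 1 < ‖z₁‖ → 1 < ‖z₂‖ →
      (1 - k) * ‖α‖ * ‖z₁ - z₂‖ ≤ ‖f z₁ - f z₂‖ ∧
        ‖f z₁ - f z₂‖ ≤ (1 + k) * ‖α‖ * ‖z₁ - z₂‖ := by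
  -- summability of coefficient series
  have hsa : Summable fun n : ℕ => ((n : ℝ) + 1) * ‖a (n + 1)‖ := by
    apply hsum.of_nonneg_of_le (fun n => by positivity)
    intro n
    have := norm_nonneg (b (n + 1))
    have hn : (0:ℝ) ≤ (n:ℝ) + 1 := by positivity
    nlinarith
  have hsb : Summable fun n : ℕ => ((n : ℝ) + 1) * ‖b (n + 1)‖ := by
    apply hsum.of_nonneg_of_le (fun n => by positivity)
    intro n
    have := norm_nonneg (a (n + 1))
    have hn : (0:ℝ) ≤ (n:ℝ) + 1 := by positivity
    nlinarith
  -- pointwise zpow bound with nice exponent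
  have hzb : ∀ z : ℂ, 1 < ‖z‖ → ∀ n : ℕ,
      ‖z ^ (-((n : ℤ) + 1))‖ ≤ 1 := by
    intro z hz n
    rw [norm_zpow]
    rw [zpow_neg]
    apply inv_le_one_of_one_le₀
    exact one_le_zpow₀ hz.le (by positivity)
  -- summability of the shifted series for any z
  have hsz : ∀ (c : ℕ → ℂ), Summable (fun n : ℕ => ((n : ℝ) + 1) * ‖c (n + 1)‖) →
      ∀ z : ℂ, 1 < ‖z‖ → Summable fun n : ℕ => c (n + 1) * z ^ (-((n : ℤ) + 1)) := by
    intro c hc z hz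
    apply Summable.of_norm
    apply hc.of_nonneg_of_le (fun n => norm_nonneg _)
    intro n
    rw [norm_mul]
    have h1 : ‖z ^ (-((n : ℤ) + 1))‖ ≤ 1 := hzb z hz n
    have h2 : ‖c (n + 1)‖ ≤ ((n : ℝ) + 1) * ‖c (n + 1)‖ := by
      nlinarith [norm_nonneg (c (n + 1)), (Nat.cast_nonneg n : (0:ℝ) ≤ n)]
    calc ‖c (n + 1)‖ * ‖z ^ (-((n : ℤ) + 1))‖ ≤ ‖c (n + 1)‖ * 1 :=
          mul_le_mul_of_nonneg_left h1 (norm_nonneg _)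
      _ = ‖c (n + 1)‖ := mul_one _
      _ ≤ _ := h2
  -- rewrite the a-series in shifted form
  have ta : ∀ z : ℂ, 1 < ‖z‖ →
      (∑' n : ℕ, a n * z ^ (-(n : ℤ))) = a 0 + ∑' n : ℕ, a (n + 1) * z ^ (-((n : ℤ) + 1)) := by
    intro z hz
    have hshift : Summable fun n : ℕ => a (n + 1) * z ^ (-((n + 1 : ℕ) : ℤ)) := by
      have := hsz a hsa z hz
      apply this.congr
      intro n; push_cast; ring_nf
    have hfull : Summable fun n : ℕ => a n * z ^ (-(n : ℤ)) :=
      (summable_nat_add_iff 1).mp hshift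
    rw [hfull.tsum_eq_zero_add]
    congr 1
    · simp
  intro z₁ z₂ h₁ h₂
  -- key differences
  set Sa : ℂ := ∑' n : ℕ, a (n + 1) * (z₁ ^ (-((n : ℤ) + 1)) - z₂ ^ (-((n : ℤ) + 1))) with hSa
  set Sb : ℂ := ∑' n : ℕ, b (n + 1) * (z₁ ^ (-((n : ℤ) + 1)) - z₂ ^ (-((n : ℤ) + 1))) with hSb
  have hdiff : ∀ (c : ℕ → ℂ), Summable (fun n : ℕ => ((n : ℝ) + 1) * ‖c (n + 1)‖) →
      (∑' n : ℕ, c (n + 1) * z₁ ^ (-((n : ℤ) + 1))) - (∑' n : ℕ, c (n + 1) * z₂ ^ (-((n : ℤ) + 1)))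
        = ∑' n : ℕ, c (n + 1) * (z₁ ^ (-((n : ℤ) + 1)) - z₂ ^ (-((n : ℤ) + 1))) := by
    intro c hc
    rw [← (hsz c hc z₁ h₁).tsum_sub (hsz c hc z₂ h₂)]
    apply tsum_congr; intro n; ring
  -- bound on such differences
  have hbnd : ∀ (c : ℕ → ℂ), Summable (fun n : ℕ => ((n : ℝ) + 1) * ‖c (n + 1)‖) →
      ‖∑' n : ℕ, c (n + 1) * (z₁ ^ (-((n : ℤ) + 1)) - z₂ ^ (-((n : ℤ) + 1)))‖ ≤
        (∑' n : ℕ, ((n : ℝ) + 1) * ‖c (n + 1)‖) * ‖z₁ - z₂‖ := by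
    intro c hc
    have hterm : ∀ n : ℕ, ‖c (n + 1) * (z₁ ^ (-((n : ℤ) + 1)) - z₂ ^ (-((n : ℤ) + 1)))‖ ≤
        ((n : ℝ) + 1) * ‖c (n + 1)‖ * ‖z₁ - z₂‖ := by
      intro n
      rw [norm_mul]
      have hz : ‖z₁ ^ (-((n : ℤ) + 1)) - z₂ ^ (-((n : ℤ) + 1))‖ ≤
          ((n : ℝ) + 1) * ‖z₁ - z₂‖ := by
        have := aux_zpow_diff z₁ z₂ h₁ h₂ (n + 1)
        have he : (-((n + 1 : ℕ) : ℤ)) = -((n : ℤ) + 1) := by push_cast; ring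
        rw [he] at this
        calc ‖z₁ ^ (-((n : ℤ) + 1)) - z₂ ^ (-((n : ℤ) + 1))‖
            ≤ ((n + 1 : ℕ) : ℝ) * ‖z₁ - z₂‖ := this
          _ = ((n : ℝ) + 1) * ‖z₁ - z₂‖ := by push_cast; ring
      calc ‖c (n + 1)‖ * ‖z₁ ^ (-((n : ℤ) + 1)) - z₂ ^ (-((n : ℤ) + 1))‖
          ≤ ‖c (n + 1)‖ * (((n : ℝ) + 1) * ‖z₁ - z₂‖) :=
            mul_le_mul_of_nonneg_left hz (norm_nonneg _)
        _ = ((n : ℝ) + 1) * ‖c (n + 1)‖ * ‖z₁ - z₂‖ := by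
            ring
    have hnorm_sum : Summable fun n : ℕ =>
        ‖c (n + 1) * (z₁ ^ (-((n : ℤ) + 1)) - z₂ ^ (-((n : ℤ) + 1)))‖ :=
      (hc.mul_right (‖z₁ - z₂‖)).of_nonneg_of_le (fun n => norm_nonneg _) hterm
    calc ‖∑' n : ℕ, c (n + 1) * (z₁ ^ (-((n : ℤ) + 1)) - z₂ ^ (-((n : ℤ) + 1)))‖
        = ‖∑' n : ℕ, c (n + 1) * (z₁ ^ (-((n : ℤ) + 1)) - z₂ ^ (-((n : ℤ) + 1)))‖ := rfl
      _ ≤ ∑' n : ℕ, ‖c (n + 1) * (z₁ ^ (-((n : ℤ) + 1)) - z₂ ^ (-((n : ℤ) + 1)))‖ :=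
          norm_tsum_le_tsum_norm hnorm_sum
      _ ≤ ∑' n : ℕ, ((n : ℝ) + 1) * ‖c (n + 1)‖ * ‖z₁ - z₂‖ :=
          Summable.tsum_le_tsum hterm hnorm_sum (hc.mul_right _)
      _ = (∑' n : ℕ, ((n : ℝ) + 1) * ‖c (n + 1)‖) * ‖z₁ - z₂‖ :=
          tsum_mul_right
  -- the residual term
  set L : ℝ := Real.log (‖z₁‖) - Real.log (‖z₂‖) with hL
  set R : ℂ := β * ((starRingEnd ℂ) z₁ - (starRingEnd ℂ) z₂) + Sa + (starRingEnd ℂ) Sb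
      + A * (L : ℂ) with hR
  have hkey : f z₁ - f z₂ = α * (z₁ - z₂) + R := by
    rw [hf z₁ h₁, hf z₂ h₂, ta z₁ h₁, ta z₂ h₂]
    have e1 : (∑' n : ℕ, a (n + 1) * z₁ ^ (-((n : ℤ) + 1))) -
        (∑' n : ℕ, a (n + 1) * z₂ ^ (-((n : ℤ) + 1))) = Sa := hdiff a hsa
    have e2 : (starRingEnd ℂ) (∑' n : ℕ, b (n + 1) * z₁ ^ (-((n : ℤ) + 1))) -
        (starRingEnd ℂ) (∑' n : ℕ, b (n + 1) * z₂ ^ (-((n : ℤ) + 1))) = (starRingEnd ℂ) Sb := by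
      rw [← map_sub, hdiff b hsb]
    have e3 : ((L : ℂ)) = (Real.log (‖z₁‖) : ℂ) - (Real.log (‖z₂‖) : ℂ) := by
      rw [hL]; push_cast; ring
    rw [hR]
    linear_combination e1 + e2 - A * e3
  have hRbnd : ‖R‖ ≤ k * ‖α‖ * ‖z₁ - z₂‖ := by
    have h1 : ‖β * ((starRingEnd ℂ) z₁ - (starRingEnd ℂ) z₂)‖ ≤
        ‖β‖ * ‖z₁ - z₂‖ := by
      rw [norm_mul, ← map_sub, Complex.norm_conj]
    have h2 : ‖Sa‖ ≤
        (∑' n : ℕ, ((n : ℝ) + 1) * ‖a (n + 1)‖) * ‖z₁ - z₂‖ :=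
      hbnd a hsa
    have h3 : ‖(starRingEnd ℂ) Sb‖ ≤
        (∑' n : ℕ, ((n : ℝ) + 1) * ‖b (n + 1)‖) * ‖z₁ - z₂‖ := by
      rw [Complex.norm_conj]; exact hbnd b hsb
    have h4 : ‖A * (L : ℂ)‖ ≤ ‖A‖ * ‖z₁ - z₂‖ := by
      rw [norm_mul, Complex.norm_real, Real.norm_eq_abs]
      apply mul_le_mul_of_nonneg_left _ (norm_nonneg A)
      calc |L| ≤ |‖z₁‖ - ‖z₂‖| := aux_log_diff h₁.le h₂.le
        _ ≤ ‖z₁ - z₂‖ := abs_norm_sub_norm_le z₁ z₂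
    have hsplit : (∑' n : ℕ, ((n : ℝ) + 1) * (‖a (n + 1)‖ + ‖b (n + 1)‖))
        = (∑' n : ℕ, ((n : ℝ) + 1) * ‖a (n + 1)‖)
          + (∑' n : ℕ, ((n : ℝ) + 1) * ‖b (n + 1)‖) := by
      rw [← hsa.tsum_add hsb]
      apply tsum_congr; intro n; ring
    have htri : ‖R‖ ≤ ‖β * ((starRingEnd ℂ) z₁ - (starRingEnd ℂ) z₂)‖
        + ‖Sa‖ + ‖(starRingEnd ℂ) Sb‖ + ‖A * (L : ℂ)‖ := by
      rw [hR]
      calc ‖β * ((starRingEnd ℂ) z₁ - (starRingEnd ℂ) z₂) + Sa + (starRingEnd ℂ) Sb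
            + A * (L : ℂ)‖ ≤ ‖β * ((starRingEnd ℂ) z₁ - (starRingEnd ℂ) z₂) + Sa
            + (starRingEnd ℂ) Sb‖ + ‖A * (L : ℂ)‖ := norm_add_le _ _
        _ ≤ ‖β * ((starRingEnd ℂ) z₁ - (starRingEnd ℂ) z₂) + Sa‖
            + ‖(starRingEnd ℂ) Sb‖ + ‖A * (L : ℂ)‖ := by
              have := norm_add_le (β * ((starRingEnd ℂ) z₁ - (starRingEnd ℂ) z₂) + Sa)
                ((starRingEnd ℂ) Sb)
              linarith
        _ ≤ _ := by
              have := norm_add_le (β * ((starRingEnd ℂ) z₁ - (starRingEnd ℂ) z₂)) Sa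
              linarith
    rw [hsplit] at hcoef
    have hd0 : (0:ℝ) ≤ ‖z₁ - z₂‖ := norm_nonneg _
    nlinarith [h1, h2, h3, h4, htri]
  constructor
  · rw [hkey]
    have h5 : ‖α * (z₁ - z₂)‖ ≤ ‖α * (z₁ - z₂) + R‖ + ‖R‖ := norm_le_add_norm_add _ _
    rw [norm_mul] at h5
    linarith
  · rw [hkey]
    calc ‖α * (z₁ - z₂) + R‖ ≤ ‖α * (z₁ - z₂)‖ + ‖R‖ :=
        norm_add_le _ _
      _ ≤ ‖α‖ * ‖z₁ - z₂‖ + k * ‖α‖ * ‖z₁ - z₂‖ := by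
          rw [norm_mul]; linarith
      _ = (1 + k) * ‖α‖ * ‖z₁ - z₂‖ := by ring
end

section
/- Let α, β, A be complex numbers, (a_n), (b_n) complex sequences with |β| + |A| + Σ_{n≥1} n(|a_n| + |b_n|) ≤ k|α|, 0 < k < 1. Then for |z| > 1: |β + A/(2·conj(z)) − conj(Σ_{n≥1} n b_n z^{−n−1})| ≤ k·|α + A/(2z) − Σ_{n≥1} n a_n z^{−n−1}|. -/
private lemma abs_term_le (c : ℕ → ℂ) (z : ℂ) (hz : 1 < ‖z‖) (n : ℕ) :
    ‖((n : ℂ) + 1) * c (n + 1) * z ^ (-((n : ℤ) + 2))‖ ≤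
      ((n : ℝ) + 1) * ‖c (n + 1)‖ := by
  rw [norm_mul, norm_mul, norm_zpow]
  have h1 : ‖(n : ℂ) + 1‖ = (n : ℝ) + 1 := by
    rw [show ((n : ℂ) + 1) = ((n + 1 : ℕ) : ℂ) by push_cast; ring, Complex.norm_natCast]
    push_cast; ring
  rw [h1]
  have h2 : ‖z‖ ^ (-((n : ℤ) + 2)) ≤ 1 := by
    rw [zpow_neg]
    rw [inv_le_one_iff₀]
    right
    calc (1:ℝ) ≤ ‖z‖ := le_of_lt hz
    _ ≤ ‖z‖ ^ ((n : ℤ) + 2) := by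
        rw [show ((n : ℤ) + 2) = ((n + 2 : ℕ) : ℤ) by omega, zpow_natCast]
        calc ‖z‖ = ‖z‖ ^ 1 := (pow_one _).symm
          _ ≤ ‖z‖ ^ (n + 2) :=
            pow_le_pow_right₀ (le_of_lt hz) (by omega)
  have h3 : 0 ≤ ((n : ℝ) + 1) * ‖c (n + 1)‖ := by positivity
  nlinarith [norm_nonneg (c (n+1)), h2, h3]

theorem stmt15 (α β A : ℂ) (a b : ℕ → ℂ) (k : ℝ) (hk0 : 0 < k) (hk1 : k < 1)
    (hsum : Summable fun n : ℕ => ((n : ℝ) + 1) *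
      (‖a (n + 1)‖ + ‖b (n + 1)‖))
    (hcoef : ‖β‖ + ‖A‖ +
      (∑' n : ℕ, ((n : ℝ) + 1) * (‖a (n + 1)‖ + ‖b (n + 1)‖)) ≤
        k * ‖α‖) :
    ∀ z : ℂ, 1 < ‖z‖ →
      ‖β + A / (2 * (starRingEnd ℂ) z) -
          (starRingEnd ℂ) (∑' n : ℕ, ((n : ℂ) + 1) * b (n + 1) * z ^ (-((n : ℤ) + 2)))‖ ≤
        k * ‖α + A / (2 * z) -
          (∑' n : ℕ, ((n : ℂ) + 1) * a (n + 1) * z ^ (-((n : ℤ) + 2)))‖ := by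
  intro z hz
  set Sa := ∑' n : ℕ, ((n : ℝ) + 1) * ‖a (n + 1)‖ with hSa_def
  set Sb := ∑' n : ℕ, ((n : ℝ) + 1) * ‖b (n + 1)‖ with hSb_def
  have hsumA : Summable fun n : ℕ => ((n : ℝ) + 1) * ‖a (n + 1)‖ := by
    apply hsum.of_nonneg_of_le (fun n => by positivity)
    intro n
    have := norm_nonneg (b (n+1))
    nlinarith [norm_nonneg (a (n+1)), Nat.cast_nonneg (α := ℝ) n]
  have hsumB : Summable fun n : ℕ => ((n : ℝ) + 1) * ‖b (n + 1)‖ := by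
    apply hsum.of_nonneg_of_le (fun n => by positivity)
    intro n
    nlinarith [norm_nonneg (a (n+1)), norm_nonneg (b (n+1)),
      Nat.cast_nonneg (α := ℝ) n]
  have hsplit : Sa + Sb = ∑' n : ℕ, ((n : ℝ) + 1) *
      (‖a (n + 1)‖ + ‖b (n + 1)‖) := by
    rw [hSa_def, hSb_def, ← Summable.tsum_add hsumA hsumB]
    congr 1; funext n; ring
  have hSanonneg : 0 ≤ Sa := tsum_nonneg (fun n => by positivity)
  have hSbnonneg : 0 ≤ Sb := tsum_nonneg (fun n => by positivity)
  -- summability of complex series and tsum abs bounds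
  have habsA : ‖∑' n : ℕ, ((n : ℂ) + 1) * a (n + 1) * z ^ (-((n : ℤ) + 2))‖ ≤ Sa := by
    have hnorm : Summable fun n : ℕ => ‖((n : ℂ) + 1) * a (n + 1) * z ^ (-((n : ℤ) + 2))‖ := by
      apply hsumA.of_nonneg_of_le (fun n => norm_nonneg _)
      intro n; exact abs_term_le a z hz n
    calc ‖∑' n : ℕ, ((n : ℂ) + 1) * a (n + 1) * z ^ (-((n : ℤ) + 2))‖
        = ‖∑' n : ℕ, ((n : ℂ) + 1) * a (n + 1) * z ^ (-((n : ℤ) + 2))‖ :=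
          rfl
      _ ≤ ∑' n : ℕ, ‖((n : ℂ) + 1) * a (n + 1) * z ^ (-((n : ℤ) + 2))‖ :=
          norm_tsum_le_tsum_norm hnorm
      _ ≤ Sa := Summable.tsum_le_tsum
          (fun n => by exact abs_term_le a z hz n) hnorm hsumA
  have habsB : ‖∑' n : ℕ, ((n : ℂ) + 1) * b (n + 1) * z ^ (-((n : ℤ) + 2))‖ ≤ Sb := by
    have hnorm : Summable fun n : ℕ => ‖((n : ℂ) + 1) * b (n + 1) * z ^ (-((n : ℤ) + 2))‖ := by
      apply hsumB.of_nonneg_of_le (fun n => norm_nonneg _)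
      intro n; exact abs_term_le b z hz n
    calc ‖∑' n : ℕ, ((n : ℂ) + 1) * b (n + 1) * z ^ (-((n : ℤ) + 2))‖
        = ‖∑' n : ℕ, ((n : ℂ) + 1) * b (n + 1) * z ^ (-((n : ℤ) + 2))‖ :=
          rfl
      _ ≤ ∑' n : ℕ, ‖((n : ℂ) + 1) * b (n + 1) * z ^ (-((n : ℤ) + 2))‖ :=
          norm_tsum_le_tsum_norm hnorm
      _ ≤ Sb := Summable.tsum_le_tsum
          (fun n => by exact abs_term_le b z hz n) hnorm hsumB
  have hz0 : z ≠ 0 := by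
    intro h; rw [h] at hz; simp at hz; linarith
  have hAz : ‖A / (2 * z)‖ ≤ ‖A‖ / 2 := by
    rw [norm_div, norm_mul]
    have : ‖(2 : ℂ)‖ = 2 := by norm_num [Complex.norm_ofNat]
    rw [this]
    apply div_le_div_of_nonneg_left ?_ (by norm_num) ?_ |>.trans_eq rfl
    · exact norm_nonneg A
    · nlinarith
  have hAzc : ‖A / (2 * (starRingEnd ℂ) z)‖ ≤ ‖A‖ / 2 := by
    rw [norm_div, norm_mul, Complex.norm_conj]
    have : ‖(2 : ℂ)‖ = 2 := by norm_num [Complex.norm_ofNat]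
    rw [this]
    apply div_le_div_of_nonneg_left (norm_nonneg A) (by norm_num)
    nlinarith
  -- numerator bound
  have hnum : ‖β + A / (2 * (starRingEnd ℂ) z) -
      (starRingEnd ℂ) (∑' n : ℕ, ((n : ℂ) + 1) * b (n + 1) * z ^ (-((n : ℤ) + 2)))‖ ≤
      ‖β‖ + ‖A‖ / 2 + Sb := by
    calc _ ≤ ‖β + A / (2 * (starRingEnd ℂ) z)‖ +
          ‖(starRingEnd ℂ) (∑' n : ℕ, ((n : ℂ) + 1) * b (n + 1) * z ^ (-((n : ℤ) + 2)))‖ :=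
        norm_sub_le _ _
      _ ≤ ‖β‖ + ‖A‖ / 2 + Sb := by
        rw [Complex.norm_conj]
        have := norm_add_le β (A / (2 * (starRingEnd ℂ) z))
        linarith
  -- denominator lower bound
  have hden : ‖α‖ - ‖A‖ / 2 - Sa ≤
      ‖α + A / (2 * z) -
        (∑' n : ℕ, ((n : ℂ) + 1) * a (n + 1) * z ^ (-((n : ℤ) + 2)))‖ := by
    have h1 : ‖α‖ ≤ ‖α + A / (2 * z) -
        (∑' n : ℕ, ((n : ℂ) + 1) * a (n + 1) * z ^ (-((n : ℤ) + 2)))‖ +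
        ‖A / (2 * z)‖ +
        ‖∑' n : ℕ, ((n : ℂ) + 1) * a (n + 1) * z ^ (-((n : ℤ) + 2))‖ := by
      have : α = (α + A / (2 * z) -
          (∑' n : ℕ, ((n : ℂ) + 1) * a (n + 1) * z ^ (-((n : ℤ) + 2))))
          - A / (2 * z)
          + (∑' n : ℕ, ((n : ℂ) + 1) * a (n + 1) * z ^ (-((n : ℤ) + 2))) := by ring
      conv_lhs => rw [this]
      refine (norm_add_le _ _).trans ?_
      have h2 := norm_sub_le (α + A / (2 * z) -
        (∑' n : ℕ, ((n : ℂ) + 1) * a (n + 1) * z ^ (-((n : ℤ) + 2)))) (A / (2 * z))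
      linarith
    linarith
  -- final arithmetic
  have hcoef' : ‖β‖ + ‖A‖ + (Sa + Sb) ≤ k * ‖α‖ := by
    rw [hsplit]; exact hcoef
  have key : ‖β‖ + ‖A‖ / 2 + Sb ≤
      k * (‖α‖ - ‖A‖ / 2 - Sa) := by
    nlinarith [norm_nonneg A, norm_nonneg β]
  calc ‖β + A / (2 * (starRingEnd ℂ) z) -
      (starRingEnd ℂ) (∑' n : ℕ, ((n : ℂ) + 1) * b (n + 1) * z ^ (-((n : ℤ) + 2)))‖
      ≤ ‖β‖ + ‖A‖ / 2 + Sb := hnum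
    _ ≤ k * (‖α‖ - ‖A‖ / 2 - Sa) := key
    _ ≤ k * ‖α + A / (2 * z) -
        (∑' n : ℕ, ((n : ℂ) + 1) * a (n + 1) * z ^ (-((n : ℤ) + 2)))‖ := by
      apply mul_le_mul_of_nonneg_left hden (le_of_lt hk0)
end

section
/- Let α₁, α₂ be nonzero complex numbers, β₁, β₂, c, C complex, and (a_n), (b_n), (A_n), (B_n) complex sequences. Suppose |β₁| + |c| + Σ_{n≥1} n(|a_n| + |b_n|) ≤ k₁|α₁| and |β₂| + |C| + Σ_{n≥1} n(|A_n| + |B_n|) ≤ k₂|α₂| with 0 < k₁ < 1 and 0 < k₂ < 1. Then |β₁β₂| + |cC| + Σ_{n≥1} n(|a_n A_n| + |b_n B_n|) ≤ sqrt(k₁k₂)·|α₁α₂|. -/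
theorem stmt16 (α₁ α₂ β₁ β₂ c C : ℂ) (hα₁ : α₁ ≠ 0) (hα₂ : α₂ ≠ 0)
    (a b A B : ℕ → ℂ) (k₁ k₂ : ℝ)
    (hk₁0 : 0 < k₁) (hk₁1 : k₁ < 1) (hk₂0 : 0 < k₂) (hk₂1 : k₂ < 1)
    (hs₁ : Summable fun n : ℕ => ((n : ℝ) + 1) *
      (‖a (n + 1)‖ + ‖b (n + 1)‖))
    (hs₂ : Summable fun n : ℕ => ((n : ℝ) + 1) *
      (‖A (n + 1)‖ + ‖B (n + 1)‖))
    (h₁ : ‖β₁‖ + ‖c‖ +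
      (∑' n : ℕ, ((n : ℝ) + 1) * (‖a (n + 1)‖ + ‖b (n + 1)‖)) ≤
        k₁ * ‖α₁‖)
    (h₂ : ‖β₂‖ + ‖C‖ +
      (∑' n : ℕ, ((n : ℝ) + 1) * (‖A (n + 1)‖ + ‖B (n + 1)‖)) ≤
        k₂ * ‖α₂‖) :
    ‖β₁ * β₂‖ + ‖c * C‖ +
      (∑' n : ℕ, ((n : ℝ) + 1) *
        (‖a (n + 1) * A (n + 1)‖ + ‖b (n + 1) * B (n + 1)‖)) ≤
      Real.sqrt (k₁ * k₂) * ‖α₁ * α₂‖ := by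
  set f : ℕ → ℝ := fun n => ((n : ℝ) + 1) * (‖a (n + 1)‖ + ‖b (n + 1)‖) with hf
  set g : ℕ → ℝ := fun n => ((n : ℝ) + 1) * (‖A (n + 1)‖ + ‖B (n + 1)‖) with hg
  have hf0 : ∀ n, 0 ≤ f n := fun n => by positivity
  have hg0 : ∀ n, 0 ≤ g n := fun n => by positivity
  set F := ∑' n, f n with hF
  set G := ∑' n, g n with hG
  have hF0 : 0 ≤ F := tsum_nonneg hf0
  have hG0 : 0 ≤ G := tsum_nonneg hg0
  -- termwise bound
  have hterm : ∀ n : ℕ, ((n : ℝ) + 1) *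
      (‖a (n + 1) * A (n + 1)‖ + ‖b (n + 1) * B (n + 1)‖) ≤ f n * g n := by
    intro n
    simp only [hf, hg, norm_mul]
    have h1 : (0:ℝ) ≤ ‖a (n+1)‖ := norm_nonneg _
    have h2 : (0:ℝ) ≤ ‖b (n+1)‖ := norm_nonneg _
    have h3 : (0:ℝ) ≤ ‖A (n+1)‖ := norm_nonneg _
    have h4 : (0:ℝ) ≤ ‖B (n+1)‖ := norm_nonneg _
    have h5 : (1:ℝ) ≤ (n : ℝ) + 1 := by simp [Nat.cast_nonneg]
    have h6 : (0:ℝ) ≤ (n:ℝ) := Nat.cast_nonneg n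
    have t1 : (0:ℝ) ≤ ((n:ℝ)+1) * (n:ℝ) * (‖a (n+1)‖ * ‖A (n+1)‖ + ‖b (n+1)‖ * ‖B (n+1)‖) := by positivity
    have t2 : (0:ℝ) ≤ ((n:ℝ)+1) * ((n:ℝ)+1) * (‖a (n+1)‖ * ‖B (n+1)‖ + ‖b (n+1)‖ * ‖A (n+1)‖) := by positivity
    nlinarith [t1, t2]
  have hfgsum : Summable fun n => f n * g n := by
    apply Summable.of_nonneg_of_le (fun n => mul_nonneg (hf0 n) (hg0 n))
      (fun n => mul_le_mul_of_nonneg_right (Summable.le_tsum hs₁ n fun m _ => hf0 m) (hg0 n))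
      (hs₂.mul_left F)
  have hTsum : Summable fun n : ℕ => ((n : ℝ) + 1) *
      (‖a (n + 1) * A (n + 1)‖ + ‖b (n + 1) * B (n + 1)‖) := by
    apply Summable.of_nonneg_of_le (fun n => by positivity) hterm hfgsum
  have hT : (∑' n : ℕ, ((n : ℝ) + 1) *
      (‖a (n + 1) * A (n + 1)‖ + ‖b (n + 1) * B (n + 1)‖)) ≤ F * G := by
    calc (∑' n : ℕ, ((n : ℝ) + 1) *
        (‖a (n + 1) * A (n + 1)‖ + ‖b (n + 1) * B (n + 1)‖))
        ≤ ∑' n, f n * g n := Summable.tsum_le_tsum hterm hTsum hfgsum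
      _ ≤ ∑' n, F * g n := Summable.tsum_le_tsum
          (fun n => mul_le_mul_of_nonneg_right (Summable.le_tsum hs₁ n fun m _ => hf0 m) (hg0 n))
          hfgsum (hs₂.mul_left F)
      _ = F * G := tsum_mul_left
  -- main chain
  have hPQ : ‖β₁ * β₂‖ + ‖c * C‖ +
      (∑' n : ℕ, ((n : ℝ) + 1) *
        (‖a (n + 1) * A (n + 1)‖ + ‖b (n + 1) * B (n + 1)‖)) ≤
      (‖β₁‖ + ‖c‖ + F) * (‖β₂‖ + ‖C‖ + G) := by
    have e1 : ‖β₁ * β₂‖ = ‖β₁‖ * ‖β₂‖ := norm_mul _ _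
    have e2 : ‖c * C‖ = ‖c‖ * ‖C‖ := norm_mul _ _
    have h1 : (0:ℝ) ≤ ‖β₁‖ := norm_nonneg _
    have h2 : (0:ℝ) ≤ ‖c‖ := norm_nonneg _
    have h3 : (0:ℝ) ≤ ‖β₂‖ := norm_nonneg _
    have h4 : (0:ℝ) ≤ ‖C‖ := norm_nonneg _
    nlinarith [mul_nonneg h1 h4, mul_nonneg h2 h3, mul_nonneg h1 hG0, mul_nonneg h2 hG0,
      mul_nonneg hF0 h3, mul_nonneg hF0 h4]
  have hP0 : 0 ≤ ‖β₁‖ + ‖c‖ + F := by positivity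
  have hQle : ‖β₂‖ + ‖C‖ + G ≤ k₂ * ‖α₂‖ := h₂
  have hPle : ‖β₁‖ + ‖c‖ + F ≤ k₁ * ‖α₁‖ := h₁
  have hmul : (‖β₁‖ + ‖c‖ + F) * (‖β₂‖ + ‖C‖ + G) ≤
      (k₁ * ‖α₁‖) * (k₂ * ‖α₂‖) := by
    apply mul_le_mul hPle hQle (by positivity) (by positivity)
  have hkk : k₁ * k₂ ≤ Real.sqrt (k₁ * k₂) := by
    have h : k₁ * k₂ ≤ 1 := by nlinarith
    nlinarith [Real.sq_sqrt (by positivity : (0:ℝ) ≤ k₁ * k₂),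
      Real.sqrt_le_one.mpr h, Real.sqrt_nonneg (k₁ * k₂)]
  calc ‖β₁ * β₂‖ + ‖c * C‖ +
      (∑' n : ℕ, ((n : ℝ) + 1) *
        (‖a (n + 1) * A (n + 1)‖ + ‖b (n + 1) * B (n + 1)‖))
      ≤ (k₁ * ‖α₁‖) * (k₂ * ‖α₂‖) := le_trans hPQ hmul
    _ = (k₁ * k₂) * ‖α₁ * α₂‖ := by rw [norm_mul]; ring
    _ ≤ Real.sqrt (k₁ * k₂) * ‖α₁ * α₂‖ :=
        mul_le_mul_of_nonneg_right hkk (norm_nonneg _)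
end
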